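/- arXiv:2302.00959 — 7 statements merged into one kernel-verified Lean document; each statement's English description precedes it below -/
import Mathlib

section
/- Let a, b, c be nonnegative integers. The determinant of the a×a matrix over ℚ whose (i,j)-entry (for i, j ∈ {1,…,a}) is the binomial coefficient C(b+c, b−i+j) equals MacMahon's product M(a,b,c) = ∏_{i=0}^{a−1} i!·(b+c+i)!/((b+i)!·(c+i)!). (This is MacMahon's formula for the number of lozenge tilings of the (a,b,c)-hexagon.) -/
open Finset

noncomputable section

/-- Binomial coefficient with integer arguments, equal to `0` whenever `k < 0` or `k > n`. -/
def ibinom (n k : ℤ) : ℚ :=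
  if 0 ≤ k ∧ k ≤ n then (n.toNat.choose k.toNat : ℚ) else 0

/-- The Pochhammer symbol (rising factorial) `x (x+1) ⋯ (x+n-1)`. -/
def poch (x : ℚ) (n : ℕ) : ℚ := (ascPochhammer ℚ n).eval x

/-- MacMahon's product `M(a,b,c)`. -/
def macmahon (a b c : ℕ) : ℚ :=
  ∏ i ∈ Finset.range a,
    ((Nat.factorial i : ℚ) * (Nat.factorial (b + c + i) : ℚ)) /
      ((Nat.factorial (b + i) : ℚ) * (Nat.factorial (c + i) : ℚ))

/-- The matrix `Q(a,b,c,d,p)` (with `1`-based indices `i, j ∈ {1, …, a+d}`):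
rows/columns with index `≤ a` are lateral, the rest are intrusive. -/
def Qmat (a b c d : ℕ) (p : ℤ) : Matrix (Fin (a + d)) (Fin (a + d)) ℚ :=
  Matrix.of fun i j =>
    if (i : ℕ) < a then
      if (j : ℕ) < a then
        ibinom ((b : ℤ) + c) ((c : ℤ) - (((i : ℕ) : ℤ) + 1) + (((j : ℕ) : ℤ) + 1))
      else
        ibinom (2 * (((j : ℕ) : ℤ) - a + 1) - 1)
          ((((j : ℕ) : ℤ) - a + 1) - (((i : ℕ) : ℤ) + 1) + p)
    else
      if (j : ℕ) < a then
        ibinom ((b : ℤ) + c - 2 * (((i : ℕ) : ℤ) - a + 1) + 1)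
          ((c : ℤ) - (((i : ℕ) : ℤ) - a + 1) + (((j : ℕ) : ℤ) + 1) - p)
      else
        ibinom (2 * (((j : ℕ) : ℤ) - ((i : ℕ) : ℤ))) (((j : ℕ) : ℤ) - ((i : ℕ) : ℤ))

/-- `E(a,b,c,d,p) = det Q(a,b,c,d,p)`, the signed count of lozenge tilings of the
`(a,b,c)`-hexagon with an even intrusion of length `d` at position `p`. -/
def E (a b c d : ℕ) (p : ℤ) : ℚ := (Qmat a b c d p).det

lemma ibinom_coe (n m : ℕ) : ibinom (n : ℤ) (m : ℤ) = (n.choose m : ℚ) := by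
  unfold ibinom
  rcases le_or_gt m n with h | h
  · rw [if_pos ⟨by positivity, by exact_mod_cast h⟩, Int.toNat_natCast, Int.toNat_natCast]
  · rw [if_neg (by push_neg; intro _; exact_mod_cast h), Nat.choose_eq_zero_of_lt h,
      Nat.cast_zero]

lemma ibinom_neg (n k : ℤ) (hk : k < 0) : ibinom n k = 0 := by
  unfold ibinom
  rw [if_neg (by push_neg; intro h; omega)]

lemma key_nat (b c i j : ℕ) :
    (b+c+i).choose (b+j) * ((c+i).factorial * (b+j).factorial)
      = (b+c+i).factorial * (c+i).descFactorial j := by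
  rcases le_or_gt j (c+i) with h | h
  · have h1 : b + j ≤ b + c + i := by omega
    have e1 := Nat.choose_mul_factorial_mul_factorial h1
    have e2 := Nat.choose_mul_factorial_mul_factorial h
    have hd : b + c + i - (b + j) = c + i - j := by omega
    rw [hd] at e1
    rw [Nat.descFactorial_eq_factorial_mul_choose]
    apply Nat.eq_of_mul_eq_mul_right (Nat.factorial_pos (c+i-j))
    calc (b+c+i).choose (b+j) * ((c+i).factorial * (b+j).factorial) * (c+i-j).factorial
        = ((b+c+i).choose (b+j) * (b+j).factorial * (c+i-j).factorial) * (c+i).factorial := by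
          ring
      _ = (b+c+i).factorial * (c+i).factorial := by rw [e1]
      _ = (b+c+i).factorial * ((c+i).choose j * j.factorial * (c+i-j).factorial) := by rw [e2]
      _ = (b+c+i).factorial * (j.factorial * (c+i).choose j) * (c+i-j).factorial := by ring
  · rw [Nat.choose_eq_zero_of_lt (by omega), Nat.descFactorial_eq_zero_iff_lt.mpr h]
    simp

lemma sum_choose_ibinom (a b c : ℕ) (i j : Fin a) :
    ∑ k : Fin a, (((i:ℕ).choose (k:ℕ) : ℚ)) *
      ibinom ((b:ℤ)+c) ((b:ℤ) - (((k:ℕ):ℤ)+1) + (((j:ℕ):ℤ)+1))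
      = ((b+c+(i:ℕ)).choose (b+(j:ℕ)) : ℚ) := by
  set f : ℕ → ℚ := fun k => ((i:ℕ).choose k : ℚ) * ibinom ((b:ℤ)+c) ((b:ℤ) + ((j:ℕ):ℤ) - k)
    with hf
  have hstep : ∀ k : Fin a, (((i:ℕ).choose (k:ℕ) : ℚ)) *
      ibinom ((b:ℤ)+c) ((b:ℤ) - (((k:ℕ):ℤ)+1) + (((j:ℕ):ℤ)+1)) = f (k:ℕ) := by
    intro k
    rw [hf]
    congr 2
    ring
  rw [Finset.sum_congr rfl (fun k _ => hstep k), Fin.sum_univ_eq_sum_range f a]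
  have h1 : ∑ k ∈ range a, f k = ∑ k ∈ range (a + (b+(j:ℕ)+1)), f k := by
    apply Finset.sum_subset (by apply Finset.range_subset_range.mpr; omega)
    intro k _ hk
    rw [Finset.mem_range, not_lt] at hk
    have : (i:ℕ) < k := lt_of_lt_of_le i.isLt hk
    rw [hf]
    simp [Nat.choose_eq_zero_of_lt this]
  have h2 : ∑ k ∈ range (b+(j:ℕ)+1), f k = ∑ k ∈ range (a + (b+(j:ℕ)+1)), f k := by
    apply Finset.sum_subset (by apply Finset.range_subset_range.mpr; omega)
    intro k _ hk
    rw [Finset.mem_range, not_lt] at hk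
    rw [hf]
    simp only []
    rw [ibinom_neg _ _ (by omega), mul_zero]
  rw [h1, ← h2]
  have h3 : ∀ k ∈ range (b+(j:ℕ)+1), f k = ((i:ℕ).choose k * (b+c).choose (b+(j:ℕ)-k) : ℚ) := by
    intro k hk
    rw [Finset.mem_range] at hk
    rw [hf]
    simp only []
    rw [show ((b:ℤ)+c) = ((b+c : ℕ) : ℤ) by push_cast; ring,
      show (b:ℤ) + ((j:ℕ):ℤ) - k = ((b+(j:ℕ)-k : ℕ) : ℤ) by omega,
      ibinom_coe]
  rw [Finset.sum_congr rfl h3,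
    show b+c+(i:ℕ) = (i:ℕ)+(b+c) by ring, Nat.add_choose_eq,
    Finset.Nat.sum_antidiagonal_eq_sum_range_succ_mk]
  push_cast
  rfl

/-- MacMahon's formula: the determinant of the `a×a` matrix with entries `C(b+c, b-i+j)`
equals MacMahon's product. -/
theorem macmahon_det (a b c : ℕ) :
    (Matrix.of fun i j : Fin a =>
        ibinom ((b : ℤ) + c) ((b : ℤ) - (((i : ℕ) : ℤ) + 1) + (((j : ℕ) : ℤ) + 1))).det =
      macmahon a b c := by
  cases a with
  | zero => simp [macmahon]
  | succ n =>
    set a := n + 1 with ha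
    set M : Matrix (Fin a) (Fin a) ℚ := Matrix.of fun i j : Fin a =>
        ibinom ((b : ℤ) + c) ((b : ℤ) - (((i : ℕ) : ℤ) + 1) + (((j : ℕ) : ℤ) + 1)) with hM
    set P : Matrix (Fin a) (Fin a) ℚ :=
      Matrix.of (fun i k : Fin a => (((i:ℕ)).choose (k:ℕ) : ℚ)) with hPdef
    set N : Matrix (Fin a) (Fin a) ℚ :=
      Matrix.of (fun i j : Fin a => ((b+c+(i:ℕ)).choose (b+(j:ℕ)) : ℚ)) with hNdef
    have hP : P.det = 1 := by
      rw [Matrix.det_of_lowerTriangular P (by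
        intro u v huv
        have h : u < v := huv
        show (((u:ℕ)).choose (v:ℕ) : ℚ) = 0
        rw [Nat.choose_eq_zero_of_lt h, Nat.cast_zero])]
      simp [hPdef]
    have hPM : P * M = N := by
      ext i j
      rw [Matrix.mul_apply]
      exact sum_choose_ibinom a b c i j
    have hdetMN : M.det = N.det := by
      calc M.det = P.det * M.det := by rw [hP, one_mul]
        _ = (P * M).det := (Matrix.det_mul P M).symm
        _ = N.det := by rw [hPM]
    set r : Fin a → ℚ := fun i => ((b+c+(i:ℕ)).factorial : ℚ) / ((c+(i:ℕ)).factorial : ℚ)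
      with hr
    set t : Fin a → ℚ := fun j => (((b+(j:ℕ)).factorial : ℚ))⁻¹ with ht
    set Em : Matrix (Fin a) (Fin a) ℚ :=
      Matrix.of (fun i j : Fin a => (descPochhammer ℚ (j:ℕ)).eval ((c:ℚ) + ((i:ℕ):ℚ))) with hEm
    have hN : N = Matrix.diagonal r * Em * Matrix.diagonal t := by
      ext i j
      rw [Matrix.mul_diagonal, Matrix.diagonal_mul]
      show ((b+c+(i:ℕ)).choose (b+(j:ℕ)) : ℚ) = r i * Em i j * t j
      have he : Em i j = (((c+(i:ℕ)).descFactorial (j:ℕ) : ℕ) : ℚ) := by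
        show (descPochhammer ℚ (j:ℕ)).eval ((c:ℚ) + ((i:ℕ):ℚ)) = _
        rw [show ((c:ℚ) + ((i:ℕ):ℚ)) = (((c+(i:ℕ) : ℕ)):ℚ) by push_cast; ring,
          descPochhammer_eval_eq_descFactorial]
      rw [he, hr, ht]
      have hk := key_nat b c (i:ℕ) (j:ℕ)
      have h1 : ((c+(i:ℕ)).factorial : ℚ) ≠ 0 := Nat.cast_ne_zero.mpr (Nat.factorial_ne_zero _)
      have h2 : ((b+(j:ℕ)).factorial : ℚ) ≠ 0 := Nat.cast_ne_zero.mpr (Nat.factorial_ne_zero _)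
      field_simp
      rw [mul_assoc]
      exact_mod_cast hk
    have hdetE : Em.det = ((Nat.superFactorial n : ℕ) : ℚ) := by
      have h := Matrix.det_eval_matrixOfPolynomials_eq_det_vandermonde
        (fun i : Fin a => ((c:ℚ) + ((i:ℕ):ℚ))) (fun j : Fin a => descPochhammer ℚ (j:ℕ))
        (fun j => descPochhammer_natDegree ℚ (j:ℕ)) (fun j => monic_descPochhammer ℚ (j:ℕ))
      rw [hEm, ← h]
      rw [show (fun i : Fin a => ((c:ℚ) + ((i:ℕ):ℚ))) = fun i : Fin a => (((i:ℕ):ℚ) + (c:ℚ)) from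
        by funext i; ring]
      rw [Matrix.det_vandermonde_add]
      exact_mod_cast Matrix.det_vandermonde_id_eq_superFactorial (R := ℚ) n
    rw [hdetMN, hN, Matrix.det_mul, Matrix.det_mul, Matrix.det_diagonal, Matrix.det_diagonal,
      hdetE]
    have hsf : ((Nat.superFactorial n : ℕ) : ℚ) = ∏ i ∈ range a, (Nat.factorial i : ℚ) := by
      rw [← Nat.prod_range_succ_factorial n, Nat.cast_prod]
    rw [hsf, hr, ht]
    simp only
    rw [Fin.prod_univ_eq_prod_range
        (fun i => ((Nat.factorial (b+c+i) : ℚ)) / ((Nat.factorial (c+i) : ℚ))) a,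
      Fin.prod_univ_eq_prod_range (fun i => ((Nat.factorial (b+i) : ℚ))⁻¹) a]
    unfold macmahon
    rw [← Finset.prod_mul_distrib, ← Finset.prod_mul_distrib]
    apply Finset.prod_congr rfl
    intro i _
    have h1 : ((c+i).factorial : ℚ) ≠ 0 := Nat.cast_ne_zero.mpr (Nat.factorial_ne_zero _)
    have h2 : ((b+i).factorial : ℚ) ≠ 0 := Nat.cast_ne_zero.mpr (Nat.factorial_ne_zero _)
    field_simp
end
end

section
/- Let a, b, c, d be nonnegative integers with a ≥ 2, b ≥ 1, c ≥ 1, and let p be an integer. Then E(a,b,c,d,p) · E(a−2,b,c,d,p−1) = E(a−1,b,c,d,p−1) · E(a−1,b,c,d,p) − E(a−1,b+1,c−1,d,p−1) · E(a−1,b−1,c+1,d,p). -/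
set_option maxHeartbeats 1000000


open Finset

noncomputable section

section DodgsonGeneral

open Matrix


variable {R : Type*} [CommRing R]

def endsFun (n : ℕ) : Fin 2 ⊕ Fin n → Fin (n + 2) :=
  Sum.elim (fun i => if (i : ℕ) = 0 then ⟨0, by omega⟩ else ⟨n + 1, by omega⟩)
    (fun k => ⟨(k : ℕ) + 1, by have := k.isLt; omega⟩)

lemma endsFun_injective (n : ℕ) : Function.Injective (endsFun n) := by
  rintro (x | x) (y | y) h <;>
    have h' := congrArg (fun z : Fin (n + 2) => (z : ℕ)) h <;>
    simp only [endsFun, Sum.elim_inl, Sum.elim_inr] at h' <;>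
    [skip; skip; skip; (congr 1; exact Fin.ext (by omega))] <;>
    split_ifs at h' <;>
    simp only [Fin.val_mk] at h' <;>
    have hx := x.isLt <;> have hy := y.isLt
  all_goals first
    | (exfalso; omega)
    | (congr 1; exact Fin.ext (by omega))

noncomputable def endsEquiv (n : ℕ) : Fin 2 ⊕ Fin n ≃ Fin (n + 2) :=
  Equiv.ofBijective (endsFun n)
    ((Fintype.bijective_iff_injective_and_card (endsFun n)).mpr
      ⟨endsFun_injective n, by simp [Nat.add_comm]⟩)

lemma endsEquiv_inl_zero (n : ℕ) : endsEquiv n (Sum.inl 0) = 0 := rfl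

lemma endsEquiv_inl_one (n : ℕ) : endsEquiv n (Sum.inl 1) = Fin.last (n + 1) := rfl

lemma endsEquiv_inr (n : ℕ) (k : Fin n) : endsEquiv n (Sum.inr k) = k.succ.castSucc := by
  apply Fin.ext
  simp [endsEquiv, endsFun]

lemma endsEquiv_inl_mem (n : ℕ) (x : Fin 2) :
    endsEquiv n (Sum.inl x) = 0 ∨ endsEquiv n (Sum.inl x) = Fin.last (n + 1) := by
  match x with
  | 0 => exact Or.inl (endsEquiv_inl_zero n)
  | 1 => exact Or.inr (endsEquiv_inl_one n)

lemma endsEquiv_inr_not_mem (n : ℕ) (k : Fin n) :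
    ¬(endsEquiv n (Sum.inr k) = 0 ∨ endsEquiv n (Sum.inr k) = Fin.last (n + 1)) := by
  rintro (h | h)
  · rw [← endsEquiv_inl_zero n] at h
    exact (by simp : (Sum.inr k : Fin 2 ⊕ Fin n) ≠ Sum.inl 0) ((endsEquiv n).injective h)
  · rw [← endsEquiv_inl_one n] at h
    exact (by simp : (Sum.inr k : Fin 2 ⊕ Fin n) ≠ Sum.inl 1) ((endsEquiv n).injective h)

theorem dj_aux {n : ℕ} (A : Matrix (Fin (n + 2)) (Fin (n + 2)) R) :
    A.det * (adjugate A 0 0 * adjugate A (Fin.last (n + 1)) (Fin.last (n + 1)) -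
        adjugate A 0 (Fin.last (n + 1)) * adjugate A (Fin.last (n + 1)) 0) =
      A.det * A.det *
        (A.submatrix (fun k : Fin n => k.succ.castSucc) (fun k : Fin n => k.succ.castSucc)).det := by
  classical
  set l : Fin (n + 2) := Fin.last (n + 1) with hl
  have h0l : (0 : Fin (n + 2)) ≠ l := by
    simp [hl, Fin.ext_iff]
  set B : Matrix (Fin (n + 2)) (Fin (n + 2)) R :=
    Matrix.of fun i j => if j = 0 ∨ j = l then adjugate A i j else if i = j then 1 else 0 with hB
  set C : Matrix (Fin (n + 2)) (Fin (n + 2)) R :=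
    Matrix.of fun i j => if j = 0 ∨ j = l then A.det * (if i = j then 1 else 0) else A i j with hC
  have hAB : A * B = C := by
    ext i j
    simp only [Matrix.mul_apply, hB, hC, Matrix.of_apply]
    by_cases hj : j = 0 ∨ j = l
    · simp only [hj, if_true]
      have h2 := congrFun (congrFun (Matrix.mul_adjugate A) i) j
      simp only [Matrix.mul_apply, Matrix.smul_apply, Matrix.one_apply, smul_eq_mul] at h2
      exact h2
    · simp only [hj, if_false, mul_ite, mul_one, mul_zero]
      simp
  -- determinant of B
  have hBsub : B.submatrix (endsEquiv n) (endsEquiv n) =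
      Matrix.fromBlocks
        (Matrix.of fun x y : Fin 2 =>
          adjugate A (endsEquiv n (Sum.inl x)) (endsEquiv n (Sum.inl y)))
        0
        (Matrix.of fun (x : Fin n) (y : Fin 2) =>
          adjugate A (endsEquiv n (Sum.inr x)) (endsEquiv n (Sum.inl y)))
        1 := by
    ext i j
    rcases i with x | x <;> rcases j with y | y <;>
      simp only [Matrix.submatrix_apply, Matrix.fromBlocks_apply₁₁, Matrix.fromBlocks_apply₁₂,
        Matrix.fromBlocks_apply₂₁, Matrix.fromBlocks_apply₂₂, Matrix.of_apply, hB,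
        Matrix.zero_apply, Matrix.one_apply]
    · rw [if_pos (endsEquiv_inl_mem n y)]
    · rw [if_neg (endsEquiv_inr_not_mem n y), if_neg]
      intro h
      exact (by simp : (Sum.inl x : Fin 2 ⊕ Fin n) ≠ Sum.inr y) ((endsEquiv n).injective h)
    · rw [if_pos (endsEquiv_inl_mem n y)]
    · rw [if_neg (endsEquiv_inr_not_mem n y)]
      by_cases hxy : x = y
      · subst hxy; rw [if_pos rfl, if_pos rfl]
      · rw [if_neg (fun h => hxy (Sum.inr_injective ((endsEquiv n).injective h))),
          if_neg hxy]
  have hdetB : B.det = adjugate A 0 0 * adjugate A l l - adjugate A 0 l * adjugate A l 0 := by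
    rw [← Matrix.det_submatrix_equiv_self (endsEquiv n) B, hBsub,
      Matrix.det_fromBlocks_zero₁₂, Matrix.det_one, mul_one, Matrix.det_fin_two]
    simp [endsEquiv_inl_zero, endsEquiv_inl_one, hl]
  -- determinant of C
  have hCsub : C.submatrix (endsEquiv n) (endsEquiv n) =
      Matrix.fromBlocks
        (A.det • (1 : Matrix (Fin 2) (Fin 2) R))
        (Matrix.of fun (x : Fin 2) (y : Fin n) =>
          A (endsEquiv n (Sum.inl x)) (endsEquiv n (Sum.inr y)))
        0
        (A.submatrix (fun k : Fin n => k.succ.castSucc) (fun k : Fin n => k.succ.castSucc)) := by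
    ext i j
    rcases i with x | x <;> rcases j with y | y <;>
      simp only [Matrix.submatrix_apply, Matrix.fromBlocks_apply₁₁, Matrix.fromBlocks_apply₁₂,
        Matrix.fromBlocks_apply₂₁, Matrix.fromBlocks_apply₂₂, Matrix.of_apply, hC,
        Matrix.zero_apply, Matrix.smul_apply, Matrix.one_apply, smul_eq_mul]
    · rw [if_pos (endsEquiv_inl_mem n y)]
      by_cases hxy : x = y
      · subst hxy; rw [if_pos rfl, if_pos rfl]
      · rw [if_neg (fun h => hxy ((Sum.inl_injective ((endsEquiv n).injective h)))),
          if_neg hxy, mul_zero]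
    · rw [if_neg (endsEquiv_inr_not_mem n y)]
    · rw [if_pos (endsEquiv_inl_mem n y), if_neg
        (fun h => (by simp : (Sum.inr x : Fin 2 ⊕ Fin n) ≠ Sum.inl y)
          ((endsEquiv n).injective h)), mul_zero]
    · rw [if_neg (endsEquiv_inr_not_mem n y)]
      rw [endsEquiv_inr, endsEquiv_inr]
  have hdetC : C.det = A.det * A.det *
      (A.submatrix (fun k : Fin n => k.succ.castSucc) (fun k : Fin n => k.succ.castSucc)).det := by
    rw [← Matrix.det_submatrix_equiv_self (endsEquiv n) C, hCsub,
      Matrix.det_fromBlocks_zero₂₁, Matrix.det_smul, Matrix.det_one, mul_one,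
      Fintype.card_fin]
    ring
  calc A.det * (adjugate A 0 0 * adjugate A l l - adjugate A 0 l * adjugate A l 0)
      = A.det * B.det := by rw [hdetB]
    _ = (A * B).det := (Matrix.det_mul A B).symm
    _ = C.det := by rw [hAB]
    _ = _ := hdetC

theorem dj_aux2 {n : ℕ} (A : Matrix (Fin (n + 2)) (Fin (n + 2)) R) :
    A.det * ((A.submatrix Fin.succ Fin.succ).det *
        (A.submatrix Fin.castSucc Fin.castSucc).det -
      (A.submatrix Fin.succ Fin.castSucc).det * (A.submatrix Fin.castSucc Fin.succ).det) =
      A.det * (A.det *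
        (A.submatrix (fun k : Fin n => k.succ.castSucc) (fun k : Fin n => k.succ.castSucc)).det) := by
  have h := dj_aux A
  rw [Matrix.adjugate_fin_succ_eq_det_submatrix, Matrix.adjugate_fin_succ_eq_det_submatrix,
    Matrix.adjugate_fin_succ_eq_det_submatrix, Matrix.adjugate_fin_succ_eq_det_submatrix] at h
  simp only [Fin.val_last, Fin.val_zero, add_zero, zero_add, pow_zero, one_mul,
    Fin.succAbove_zero, Fin.succAbove_last] at h
  have heven : ((-1 : R)) ^ ((n + 1 : ℕ) + (n + 1 : ℕ)) = 1 := Even.neg_one_pow ⟨n + 1, rfl⟩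
  rw [heven, one_mul] at h
  set ε : R := (-1 : R) ^ (n + 1 : ℕ) with hε
  have hε2 : ε * ε = 1 := by
    rw [hε, ← pow_add]; exact Even.neg_one_pow ⟨n + 1, rfl⟩
  set dss := (A.submatrix Fin.succ Fin.succ).det
  set dcc := (A.submatrix Fin.castSucc Fin.castSucc).det
  set dcs := (A.submatrix Fin.castSucc Fin.succ).det
  set dsc := (A.submatrix Fin.succ Fin.castSucc).det
  linear_combination h + A.det * dcs * dsc * hε2

theorem dodgson {n : ℕ} (A : Matrix (Fin (n + 2)) (Fin (n + 2)) ℚ) :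
    A.det *
        (A.submatrix (fun k : Fin n => k.succ.castSucc) (fun k : Fin n => k.succ.castSucc)).det =
      (A.submatrix Fin.succ Fin.succ).det * (A.submatrix Fin.castSucc Fin.castSucc).det -
        (A.submatrix Fin.succ Fin.castSucc).det * (A.submatrix Fin.castSucc Fin.succ).det := by
  classical
  set P := Matrix.mvPolynomialX (Fin (n + 2)) (Fin (n + 2)) ℤ with hP
  have hgen := dj_aux2 P
  have hPdet : P.det ≠ 0 := Matrix.det_mvPolynomialX_ne_zero (Fin (n + 2)) ℤ
  have hgen' := mul_left_cancel₀ hPdet hgen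
  set φ : MvPolynomial (Fin (n + 2) × Fin (n + 2)) ℤ →+* ℚ :=
    MvPolynomial.eval₂Hom (Int.castRingHom ℚ) (fun pq => A pq.1 pq.2) with hφ
  have hPA : P.map φ = A := by
    rw [hP, hφ]
    have := Matrix.mvPolynomialX_map_eval₂ (Int.castRingHom ℚ) A
    simpa [MvPolynomial.coe_eval₂Hom] using this
  have hmap := congrArg φ hgen'
  rw [map_sub, _root_.map_mul, _root_.map_mul, _root_.map_mul, RingHom.map_det,
    RingHom.map_det, RingHom.map_det, RingHom.map_det, RingHom.map_det,
    RingHom.map_det] at hmap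
  simp only [RingHom.mapMatrix_apply] at hmap
  have hsub : ∀ (f g : Fin (n + 1) → Fin (n + 2)),
      (P.submatrix f g).map φ = A.submatrix f g := by
    intro f g; rw [← hPA]; rfl
  have hsub' : ∀ (f g : Fin n → Fin (n + 2)),
      (P.submatrix f g).map φ = A.submatrix f g := by
    intro f g; rw [← hPA]; rfl
  rw [hPA, hsub, hsub, hsub, hsub, hsub'] at hmap
  linarith [hmap]

end DodgsonGeneral

section EntrySupport

/-- entry function of `Qmat` in terms of natural number indices -/
def Qent (a b c : ℕ) (p : ℤ) (i j : ℕ) : ℚ :=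
  if i < a then
    if j < a then
      ibinom ((b : ℤ) + c) ((c : ℤ) - ((i : ℤ) + 1) + ((j : ℤ) + 1))
    else
      ibinom (2 * ((j : ℤ) - a + 1) - 1) (((j : ℤ) - a + 1) - ((i : ℤ) + 1) + p)
  else
    if j < a then
      ibinom ((b : ℤ) + c - 2 * ((i : ℤ) - a + 1) + 1)
        ((c : ℤ) - ((i : ℤ) - a + 1) + ((j : ℤ) + 1) - p)
    else
      ibinom (2 * ((j : ℤ) - (i : ℤ))) ((j : ℤ) - (i : ℤ))

lemma Qmat_apply' (a b c d : ℕ) (p : ℤ) (i j : Fin (a + d)) :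
    Qmat a b c d p i j = Qent a b c p (i : ℕ) (j : ℕ) := rfl

def rotFun (m t : ℕ) (ht : t < m) : Fin m → Fin m := fun k =>
  if h1 : (k : ℕ) = m - 1 then ⟨t, ht⟩
  else if t ≤ (k : ℕ) then ⟨(k : ℕ) + 1, by have := k.isLt; omega⟩
  else k

lemma rotFun_val (m t : ℕ) (ht : t < m) (k : Fin m) :
    ((rotFun m t ht k : Fin m) : ℕ) =
      if (k : ℕ) = m - 1 then t else if t ≤ (k : ℕ) then (k : ℕ) + 1 else (k : ℕ) := by
  unfold rotFun
  split_ifs <;> simp_all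

lemma rotFun_injective (m t : ℕ) (ht : t < m) : Function.Injective (rotFun m t ht) := by
  intro x y h
  have hx := x.isLt; have hy := y.isLt
  have h' := congrArg (fun z : Fin m => (z : ℕ)) h
  simp only [rotFun_val] at h'
  apply Fin.ext
  split_ifs at h' <;> omega

def rot (m t : ℕ) (ht : t < m) : Equiv.Perm (Fin m) :=
  Equiv.ofBijective (rotFun m t ht)
    ((Fintype.bijective_iff_injective_and_card _).mpr ⟨rotFun_injective m t ht, rfl⟩)

lemma rot_val (m t : ℕ) (ht : t < m) (k : Fin m) :
    ((rot m t ht k : Fin m) : ℕ) =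
      if (k : ℕ) = m - 1 then t else if t ≤ (k : ℕ) then (k : ℕ) + 1 else (k : ℕ) :=
  rotFun_val m t ht k

end EntrySupport



/-- Dodgson condensation specialized to `E(a,b,c,d,p)`. -/
theorem dodgson_for_E (a b c d : ℕ) (p : ℤ) (ha : 2 ≤ a) (hb : 1 ≤ b) (hc : 1 ≤ c) :
    E a b c d p * E (a - 2) b c d (p - 1) =
      E (a - 1) b c d (p - 1) * E (a - 1) b c d p -
        E (a - 1) (b + 1) (c - 1) d (p - 1) * E (a - 1) (b - 1) (c + 1) d p := by
  obtain ⟨a', rfl⟩ : ∃ a', a = a' + 2 := ⟨a - 2, by omega⟩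
  have ea1 : a' + 2 - 1 = a' + 1 := by omega
  have ea2 : a' + 2 - 2 = a' := by omega
  rw [ea1, ea2]
  set n := a' + d with hn
  have hsz : n + 2 = (a' + 2) + d := by omega
  set e : Fin (n + 2) ≃ Fin ((a' + 2) + d) := finCongr hsz with he
  set e1 : Fin (n + 1) ≃ Fin ((a' + 1) + d) := finCongr (by omega) with he1
  set e0 : Fin n ≃ Fin (a' + d) := finCongr (by omega) with he0
  set ρ : Equiv.Perm (Fin (n + 2)) := rot (n + 2) (a' + 1) (by omega) with hρ
  set σ : Equiv.Perm (Fin (n + 1)) := rot (n + 1) a' (by omega) with hσ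
  set Mr : Matrix (Fin (n + 2)) (Fin (n + 2)) ℚ :=
    (Qmat (a' + 2) b c d p).submatrix e e with hMr
  set A : Matrix (Fin (n + 2)) (Fin (n + 2)) ℚ := Mr.submatrix ρ ρ with hA
  have hfact : ∀ k : Fin (n + 1), ρ (Fin.succ k) = Fin.succ (σ k) := by
    intro k
    have hk := k.isLt
    apply Fin.ext
    simp only [hρ, hσ, rot_val, Fin.val_succ]
    split_ifs <;> omega
  -- the five identifications
  have hinner : A.submatrix (fun k : Fin n => k.succ.castSucc)
      (fun k : Fin n => k.succ.castSucc) = (Qmat a' b c d (p - 1)).submatrix e0 e0 := by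
    ext i j
    have hi := i.isLt; have hj := j.isLt
    simp only [hA, hMr, Matrix.submatrix_apply, Qmat_apply', hρ, rot_val,
      Fin.coe_castSucc, Fin.val_succ, finCongr_apply_coe, he, he0]
    unfold Qent
    split_ifs <;> first | (exfalso; omega) | rfl | (congr 1 <;> omega)
  have hss : Mr.submatrix Fin.succ Fin.succ =
      (Qmat (a' + 1) b c d (p - 1)).submatrix e1 e1 := by
    ext i j
    have hi := i.isLt; have hj := j.isLt
    simp only [hMr, Matrix.submatrix_apply, Qmat_apply', Fin.val_succ,
      finCongr_apply_coe, he, he1]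
    unfold Qent
    split_ifs <;> first | (exfalso; omega) | rfl | (congr 1 <;> omega)
  have hcc : Mr.submatrix (fun k : Fin (n + 1) => ρ k.castSucc)
      (fun k : Fin (n + 1) => ρ k.castSucc) =
      (Qmat (a' + 1) b c d p).submatrix e1 e1 := by
    ext i j
    have hi := i.isLt; have hj := j.isLt
    simp only [hMr, Matrix.submatrix_apply, Qmat_apply', hρ, rot_val,
      Fin.coe_castSucc, finCongr_apply_coe, he, he1]
    unfold Qent
    split_ifs <;> first | (exfalso; omega) | rfl | (congr 1 <;> omega)
  have hsc : Mr.submatrix Fin.succ (fun k : Fin (n + 1) => ρ k.castSucc) =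
      (Qmat (a' + 1) (b + 1) (c - 1) d (p - 1)).submatrix e1 e1 := by
    ext i j
    have hi := i.isLt; have hj := j.isLt
    simp only [hMr, Matrix.submatrix_apply, Qmat_apply', hρ, rot_val,
      Fin.coe_castSucc, Fin.val_succ, finCongr_apply_coe, he, he1]
    unfold Qent
    split_ifs <;> first | (exfalso; omega) | rfl | (congr 1 <;> omega)
  have hcs : Mr.submatrix (fun k : Fin (n + 1) => ρ k.castSucc) Fin.succ =
      (Qmat (a' + 1) (b - 1) (c + 1) d p).submatrix e1 e1 := by
    ext i j
    have hi := i.isLt; have hj := j.isLt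
    simp only [hMr, Matrix.submatrix_apply, Qmat_apply', hρ, rot_val,
      Fin.coe_castSucc, Fin.val_succ, finCongr_apply_coe, he, he1]
    unfold Qent
    split_ifs <;> first | (exfalso; omega) | rfl | (congr 1 <;> omega)
  -- A-submatrices via σ
  have hA_ss : A.submatrix Fin.succ Fin.succ =
      (Mr.submatrix Fin.succ Fin.succ).submatrix σ σ := by
    ext i j
    simp only [hA, Matrix.submatrix_apply, hfact]
  have hA_cc : A.submatrix Fin.castSucc Fin.castSucc =
      Mr.submatrix (fun k : Fin (n + 1) => ρ k.castSucc)
        (fun k : Fin (n + 1) => ρ k.castSucc) := rfl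
  have hA_sc : A.submatrix Fin.succ Fin.castSucc =
      (Mr.submatrix Fin.succ (fun k : Fin (n + 1) => ρ k.castSucc)).submatrix σ id := by
    ext i j
    simp only [hA, Matrix.submatrix_apply, hfact, id]
  have hA_cs : A.submatrix Fin.castSucc Fin.succ =
      (Mr.submatrix (fun k : Fin (n + 1) => ρ k.castSucc) Fin.succ).submatrix id σ := by
    ext i j
    simp only [hA, Matrix.submatrix_apply, hfact, id]
  -- determinant identities
  have d0 : A.det = E (a' + 2) b c d p := by
    rw [hA, Matrix.det_submatrix_equiv_self, hMr, Matrix.det_submatrix_equiv_self]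
    rfl
  have dinner : (A.submatrix (fun k : Fin n => k.succ.castSucc)
      (fun k : Fin n => k.succ.castSucc)).det = E a' b c d (p - 1) := by
    rw [hinner, Matrix.det_submatrix_equiv_self]
    rfl
  have dss : (A.submatrix Fin.succ Fin.succ).det = E (a' + 1) b c d (p - 1) := by
    rw [hA_ss, Matrix.det_submatrix_equiv_self, hss, Matrix.det_submatrix_equiv_self]
    rfl
  have dcc : (A.submatrix Fin.castSucc Fin.castSucc).det = E (a' + 1) b c d p := by
    rw [hA_cc, hcc, Matrix.det_submatrix_equiv_self]
    rfl
  have dsc : (A.submatrix Fin.succ Fin.castSucc).det =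
      (Equiv.Perm.sign σ : ℚ) * E (a' + 1) (b + 1) (c - 1) d (p - 1) := by
    rw [hA_sc, Matrix.det_permute, hsc, Matrix.det_submatrix_equiv_self]
    rfl
  have dcs : (A.submatrix Fin.castSucc Fin.succ).det =
      (Equiv.Perm.sign σ : ℚ) * E (a' + 1) (b - 1) (c + 1) d p := by
    rw [hA_cs, Matrix.det_permute', hcs, Matrix.det_submatrix_equiv_self]
    rfl
  have hsgn : (Equiv.Perm.sign σ : ℚ) * (Equiv.Perm.sign σ : ℚ) = 1 := by
    rcases Int.units_eq_one_or (Equiv.Perm.sign σ) with h | h <;> rw [h] <;> norm_num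
  have hd := dodgson A
  rw [d0, dinner, dss, dcc, dsc, dcs] at hd
  linear_combination hd - E (a' + 1) (b + 1) (c - 1) d (p - 1) *
    E (a' + 1) (b - 1) (c + 1) d p * hsgn
end
end

section
/- Let a, b, c, d be nonnegative integers and let p be an integer. Then E(a,b,c,d,p) = E(a,c,b,d,a−p). (Reflection of the damaged hexagon at a vertical axis.) -/
open Finset

noncomputable section

/-- Symmetry of `ibinom`. -/
lemma ibinom_symm (n k : ℤ) : ibinom n k = ibinom n (n - k) := by
  unfold ibinom
  by_cases h : 0 ≤ k ∧ k ≤ n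
  · have h' : 0 ≤ n - k ∧ n - k ≤ n := by omega
    rw [if_pos h, if_pos h']
    have hk : (n - k).toNat = n.toNat - k.toNat := by omega
    rw [hk, Nat.choose_symm (by omega)]
  · have h' : ¬ (0 ≤ n - k ∧ n - k ≤ n) := by omega
    rw [if_neg h, if_neg h']

lemma ibinom_flip {n₁ n₂ k₁ k₂ : ℤ} (hn : n₁ = n₂) (hk : k₁ + k₂ = n₁) :
    ibinom n₁ k₁ = ibinom n₂ k₂ := by
  subst hn
  rw [ibinom_symm]
  congr 1
  omega

/-- The reflection permutation reversing the first `a` indices. -/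
def reflPerm (a d : ℕ) : Equiv.Perm (Fin (a + d)) where
  toFun i := if h : (i : ℕ) < a then ⟨a - 1 - (i : ℕ), by omega⟩ else i
  invFun i := if h : (i : ℕ) < a then ⟨a - 1 - (i : ℕ), by omega⟩ else i
  left_inv i := by
    by_cases h : (i : ℕ) < a
    · simp only [dif_pos h]
      have h2 : a - 1 - (i : ℕ) < a := by omega
      simp only [dif_pos h2]
      ext
      simp
      omega
    · simp only [dif_neg h]
  right_inv i := by
    by_cases h : (i : ℕ) < a
    · simp only [dif_pos h]
      have h2 : a - 1 - (i : ℕ) < a := by omega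
      simp only [dif_pos h2]
      ext
      simp
      omega
    · simp only [dif_neg h]

/-- Reflection of the damaged hexagon at a vertical axis. -/
theorem E_symmetry (a b c d : ℕ) (p : ℤ) :
    E a b c d p = E a c b d ((a : ℤ) - p) := by
  have key : Qmat a c b d ((a : ℤ) - p) =
      (Qmat a b c d p).submatrix (reflPerm a d) (reflPerm a d) := by
    ext i j
    simp only [Qmat, Matrix.submatrix_apply, Matrix.of_apply, reflPerm, Equiv.coe_fn_mk]
    by_cases hi : (i : ℕ) < a <;> by_cases hj : (j : ℕ) < a
    · have hi' : a - 1 - (i : ℕ) < a := by omega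
      have hj' : a - 1 - (j : ℕ) < a := by omega
      simp only [dif_pos hi, dif_pos hj, if_pos hi, if_pos hj, if_pos hi', if_pos hj']
      refine (ibinom_flip ?_ ?_).symm <;> push_cast <;> omega
    · have hi' : a - 1 - (i : ℕ) < a := by omega
      simp only [dif_pos hi, dif_neg hj, if_pos hi, if_neg hj, if_pos hi']
      refine (ibinom_flip ?_ ?_).symm <;> push_cast <;> omega
    · have hj' : a - 1 - (j : ℕ) < a := by omega
      simp only [dif_neg hi, dif_pos hj, if_neg hi, if_pos hj, if_pos hj']
      refine (ibinom_flip ?_ ?_).symm <;> push_cast <;> omega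
    · simp only [dif_neg hi, dif_neg hj, if_neg hi, if_neg hj]
  rw [E, E, key, Matrix.det_submatrix_equiv_self]
end
end

section
/- Let a, c be positive integers and b a nonnegative integer. Then ∑_{k=0}^{a−1} (−1)^{a+k−1} · C(a−1, k) · (b+k+2−a)_{a−1} / (a+c−k−1) = (a−1)! · (c−1)! · (a+b+c−1)! / ( (a+c−1)! · (b+c)! ), where the sum is over rationals and (x)_n denotes the Pochhammer symbol (rising factorial), evaluated at the (possibly negative) integer argument b+k+2−a. -/
open Finset Polynomial

lemma sumA (n : ℕ) : ∀ (x : ℚ), 0 < x →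
    ∑ k ∈ Finset.range (n+1), (-1:ℚ)^k * (n.choose k) / (x + k) =
      (Nat.factorial n : ℚ) / (ascPochhammer ℚ (n+1)).eval x := by
  induction n with
  | zero => intro x hx; simp [ascPochhammer_one]
  | succ n ih =>
    intro x hx
    have hx1 : (0:ℚ) < x + 1 := by linarith
    have hP : (0:ℚ) < (ascPochhammer ℚ (n+1)).eval x := ascPochhammer_pos _ _ hx
    have hP1 : (0:ℚ) < (ascPochhammer ℚ (n+1)).eval (x+1) := ascPochhammer_pos _ _ hx1
    have hQ : (ascPochhammer ℚ (n+2)).eval x = (ascPochhammer ℚ (n+1)).eval x * (x + (n+1)) := by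
      have := ascPochhammer_succ_eval (S := ℚ) (n+1) x
      push_cast at this ⊢; linarith [this]
    have hQ' : (ascPochhammer ℚ (n+2)).eval x = x * (ascPochhammer ℚ (n+1)).eval (x+1) := by
      have h := ascPochhammer_succ_left ℚ (n+1)
      rw [h]; simp [eval_comp]
    -- split the sum
    rw [Finset.sum_range_succ']
    push_cast
    have hsplit : ∀ i ∈ Finset.range (n+1),
        (-1:ℚ)^(i+1) * ((n+1).choose (i+1)) / (x + (i+1)) =
          (-1:ℚ)^(i+1) * (n.choose (i+1)) / (x + (i+1))
            + (-((-1:ℚ)^i * (n.choose i) / ((x+1) + i))) := by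
      intro i _
      have hc : (((n+1).choose (i+1) : ℚ)) = (n.choose i : ℚ) + (n.choose (i+1) : ℚ) := by
        rw [Nat.choose_succ_succ]; push_cast; ring
      have hne : x + ((i:ℚ)+1) ≠ 0 := by positivity
      rw [hc]
      field_simp
      ring
    rw [Finset.sum_congr rfl hsplit, Finset.sum_add_distrib]
    have e1 : (∑ i ∈ Finset.range (n+1), (-1:ℚ)^(i+1) * (n.choose (i+1)) / (x + (i+1)))
        + (-1:ℚ)^0 * ((n+1).choose 0) / (x + 0) =
        ∑ k ∈ Finset.range (n+1), (-1:ℚ)^k * (n.choose k) / (x + k) := by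
      rw [Finset.sum_range_succ,
        Finset.sum_range_succ' (fun k => (-1:ℚ)^k * (n.choose k : ℚ) / (x + (k : ℚ)))]
      simp only [Nat.choose_succ_self, Nat.cast_zero, mul_zero, zero_div, add_zero, Nat.choose_zero_right]
      push_cast
      ring_nf
    have e2 : ∑ i ∈ Finset.range (n+1), (-((-1:ℚ)^i * (n.choose i) / ((x+1) + i))) =
        - ((Nat.factorial n : ℚ) / (ascPochhammer ℚ (n+1)).eval (x+1)) := by
      rw [Finset.sum_neg_distrib, ih (x+1) hx1]
    have key : (ascPochhammer ℚ (n+1)).eval x * (x + ((n:ℚ)+1)) =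
        x * (ascPochhammer ℚ (n+1)).eval (x+1) := by rw [← hQ, hQ']
    calc (∑ i ∈ Finset.range (n+1), (-1:ℚ)^(i+1) * (n.choose (i+1)) / (x + (i+1)) +
          ∑ i ∈ Finset.range (n+1), (-((-1:ℚ)^i * (n.choose i) / ((x+1) + i))))
          + (-1:ℚ)^0 * ((n+1).choose 0) / (x + 0)
        = (∑ i ∈ Finset.range (n+1), (-1:ℚ)^(i+1) * (n.choose (i+1)) / (x + (i+1)) +
            (-1:ℚ)^0 * ((n+1).choose 0) / (x + 0))
          + ∑ i ∈ Finset.range (n+1), (-((-1:ℚ)^i * (n.choose i) / ((x+1) + i))) := by ring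
      _ = ((Nat.factorial n : ℚ) / (ascPochhammer ℚ (n+1)).eval x)
          - ((Nat.factorial n : ℚ) / (ascPochhammer ℚ (n+1)).eval (x+1)) := by
          rw [e1, e2, ih x hx]; ring
      _ = (Nat.factorial (n+1) : ℚ) / (ascPochhammer ℚ (n+1+1)).eval x := by
          rw [show (n+1+1) = (n+2) from rfl, hQ]
          have hx2 : (0:ℚ) < x + ((n:ℚ)+1) := by positivity
          rw [div_sub_div _ _ (ne_of_gt hP) (ne_of_gt hP1),
            div_eq_div_iff (mul_pos hP hP1).ne' (mul_pos hP hx2).ne']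
          push_cast [Nat.factorial_succ]
          linear_combination (-(Nat.factorial n : ℚ) *
            Polynomial.eval x (ascPochhammer ℚ (n+1))) * key

lemma altsum (n : ℕ) : ∀ P : Polynomial ℚ, P.degree < (n : WithBot ℕ) →
    ∑ k ∈ Finset.range (n+1), (-1:ℚ)^k * (n.choose k : ℚ) * P.eval (k : ℚ) = 0 := by
  induction n with
  | zero =>
    intro P hP
    have : P = 0 := Polynomial.degree_eq_bot.mp
      (Nat.WithBot.lt_zero_iff.mp (by exact_mod_cast hP))
    simp [this]
  | succ n ih =>
    intro P hP
    have hips : ∀ (k:ℚ), (P.comp (Polynomial.X + 1)).eval k = P.eval (k+1) := by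
      intro k; simp [Polynomial.eval_comp]
    -- degree bound for the difference
    have hdeg : (P - P.comp (Polynomial.X + 1)).degree < (n : WithBot ℕ) := by
      by_cases hP0 : P = 0
      · simp [hP0, Nat.WithBot.lt_zero_iff]
      have hq1 : (Polynomial.X + 1 : Polynomial ℚ).natDegree = 1 := by
        simpa using Polynomial.natDegree_X_add_C (1:ℚ)
      have hlc : P.leadingCoeff = (P.comp (Polynomial.X + 1)).leadingCoeff := by
        rw [Polynomial.leadingCoeff_comp (by rw [hq1]; norm_num)]
        have : (Polynomial.X + 1 : Polynomial ℚ).leadingCoeff = 1 := by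
          simpa using Polynomial.leadingCoeff_X_add_C (1:ℚ)
        rw [this, one_pow, mul_one]
      have hcne : P.comp (Polynomial.X + 1) ≠ 0 := by
        intro h
        apply hP0
        have := Polynomial.leadingCoeff_eq_zero.mpr h
        rw [← hlc] at this
        exact Polynomial.leadingCoeff_eq_zero.mp this
      have hdegeq : P.degree = (P.comp (Polynomial.X + 1)).degree := by
        rw [Polynomial.degree_eq_natDegree hP0, Polynomial.degree_eq_natDegree hcne,
          Polynomial.natDegree_comp, hq1, mul_one]
      by_cases hD : P - P.comp (Polynomial.X + 1) = 0
      · rw [hD]; exact lt_of_le_of_lt (by simp) (WithBot.bot_lt_coe n)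
      have hlt := Polynomial.degree_sub_lt hdegeq hP0 hlc
      have h1 : (P - P.comp (Polynomial.X + 1)).natDegree < P.natDegree :=
        Polynomial.natDegree_lt_natDegree hD hlt
      have h2 : P.natDegree < n + 1 := (Polynomial.natDegree_lt_iff_degree_lt hP0).mpr
        (by exact_mod_cast hP)
      exact (Polynomial.natDegree_lt_iff_degree_lt hD).mp (by omega)
    rw [Finset.sum_range_succ']
    push_cast
    have hsplit : ∀ i ∈ Finset.range (n+1),
        (-1:ℚ)^(i+1) * ((n+1).choose (i+1) : ℚ) * P.eval ((i:ℚ)+1) =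
          (-1:ℚ)^(i+1) * (n.choose (i+1) : ℚ) * P.eval ((i:ℚ)+1)
            + (-((-1:ℚ)^i * (n.choose i : ℚ) * (P.comp (Polynomial.X + 1)).eval (i:ℚ))) := by
      intro i _
      rw [hips]
      have hc : (((n+1).choose (i+1) : ℚ)) = (n.choose i : ℚ) + (n.choose (i+1) : ℚ) := by
        rw [Nat.choose_succ_succ]; push_cast; ring
      rw [hc]; ring
    rw [Finset.sum_congr rfl hsplit, Finset.sum_add_distrib]
    have e1 : ∑ i ∈ Finset.range (n+1), (-1:ℚ)^(i+1) * (n.choose (i+1) : ℚ) * P.eval ((i:ℚ)+1)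
        + (-1:ℚ)^0 * ((n+1).choose 0 : ℚ) * P.eval (0:ℚ) =
        ∑ k ∈ Finset.range (n+1), (-1:ℚ)^k * (n.choose k : ℚ) * P.eval (k:ℚ) := by
      rw [Finset.sum_range_succ,
        Finset.sum_range_succ' (fun k => (-1:ℚ)^k * (n.choose k : ℚ) * P.eval (k:ℚ))]
      simp only [Nat.choose_succ_self, Nat.cast_zero, mul_zero, zero_mul, add_zero,
        Nat.choose_zero_right, Nat.cast_one]
      push_cast
      ring_nf
    calc (∑ i ∈ Finset.range (n+1), (-1:ℚ)^(i+1) * (n.choose (i+1) : ℚ) * P.eval ((i:ℚ)+1) +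
          ∑ i ∈ Finset.range (n+1),
            (-((-1:ℚ)^i * (n.choose i : ℚ) * (P.comp (Polynomial.X + 1)).eval (i:ℚ))))
          + (-1:ℚ)^0 * ((n+1).choose 0 : ℚ) * P.eval (0:ℚ)
        = (∑ i ∈ Finset.range (n+1), (-1:ℚ)^(i+1) * (n.choose (i+1) : ℚ) * P.eval ((i:ℚ)+1)
            + (-1:ℚ)^0 * ((n+1).choose 0 : ℚ) * P.eval (0:ℚ))
          + ∑ i ∈ Finset.range (n+1),
            (-((-1:ℚ)^i * (n.choose i : ℚ) * (P.comp (Polynomial.X + 1)).eval (i:ℚ))) := by ring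
      _ = ∑ k ∈ Finset.range (n+1),
            (-1:ℚ)^k * (n.choose k : ℚ) * (P - P.comp (Polynomial.X + 1)).eval (k:ℚ) := by
          rw [e1, ← Finset.sum_add_distrib]
          refine Finset.sum_congr rfl fun k _ => ?_
          rw [Polynomial.eval_sub]
          ring
      _ = 0 := ih _ hdeg




open Finset

noncomputable section

/-- Summation formula for `S_a` (found by Zeilberger's algorithm). -/
theorem zeilberger_sum (a b c : ℕ) (ha : 0 < a) (hc : 0 < c) :
    ∑ k ∈ Finset.range a,
        (-1 : ℚ) ^ (a + k - 1) * (Nat.choose (a - 1) k : ℚ) *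
          poch ((b : ℚ) + k + 2 - a) (a - 1) / ((a : ℚ) + c - k - 1) =
      (Nat.factorial (a - 1) : ℚ) * (Nat.factorial (c - 1) : ℚ) *
          (Nat.factorial (a + b + c - 1) : ℚ) /
        ((Nat.factorial (a + c - 1) : ℚ) * (Nat.factorial (b + c) : ℚ)) := by
  obtain ⟨n, rfl⟩ : ∃ n, a = n + 1 := ⟨a - 1, by omega⟩
  simp only [show ∀ k : ℕ, n + 1 + k - 1 = n + k from fun k => by omega,
    show n + 1 - 1 = n from rfl, show n + 1 + b + c - 1 = n + b + c from by omega,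
    show n + 1 + c - 1 = n + c from by omega]
  have hcq : (0:ℚ) < (c:ℚ) := by exact_mod_cast hc
  -- the Pochhammer polynomial
  set P : Polynomial ℚ :=
    (ascPochhammer ℚ n).comp (Polynomial.X + Polynomial.C ((b:ℚ) + 1 - n)) with hPdef
  have hPeval : ∀ x : ℚ, P.eval x = (ascPochhammer ℚ n).eval (x + ((b:ℚ) + 1 - n)) := by
    intro x; simp [hPdef, Polynomial.eval_comp]
  -- division by X - r
  obtain ⟨Q, hQ⟩ : Polynomial.X - Polynomial.C ((n:ℚ) + c) ∣
      P - Polynomial.C (P.eval ((n:ℚ) + c)) := Polynomial.X_sub_C_dvd_sub_C_eval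
  have hPk : ∀ x : ℚ, P.eval x = (x - ((n:ℚ) + c)) * Q.eval x + P.eval ((n:ℚ) + c) := by
    intro x
    have := congrArg (Polynomial.eval x) hQ
    simp only [Polynomial.eval_sub, Polynomial.eval_mul, Polynomial.eval_X,
      Polynomial.eval_C] at this
    linarith
  -- degree bound on Q
  have hdegP : P.natDegree = n := by
    rw [hPdef, Polynomial.natDegree_comp, Polynomial.natDegree_X_add_C, mul_one,
      ascPochhammer_natDegree]
  have hQdeg : Q.degree < (n : WithBot ℕ) := by
    by_cases hQ0 : Q = 0
    · rw [hQ0]; exact lt_of_le_of_lt (by simp) (WithBot.bot_lt_coe n)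
    · have h1 : ((Polynomial.X - Polynomial.C ((n:ℚ) + c)) * Q).natDegree = 1 + Q.natDegree := by
        rw [Polynomial.natDegree_mul (Polynomial.X_sub_C_ne_zero _) hQ0,
          Polynomial.natDegree_X_sub_C]
      have h2 : (P - Polynomial.C (P.eval ((n:ℚ) + c))).natDegree ≤ n := by
        refine le_trans (Polynomial.natDegree_sub_le _ _) ?_
        simp [hdegP]
      rw [← hQ] at h1
      have h3 : 1 + Q.natDegree ≤ n := h1 ▸ h2
      exact (Polynomial.natDegree_lt_iff_degree_lt hQ0).mp (by omega)
  -- split each term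
  have step1 : ∑ k ∈ Finset.range (n+1),
      (-1 : ℚ) ^ (n + k) * (Nat.choose n k : ℚ) *
        poch ((b : ℚ) + k + 2 - ((n:ℕ)+1 : ℕ)) n / (((n:ℕ)+1 : ℕ) + (c:ℚ) - k - 1) =
      P.eval ((n:ℚ) + c) *
        ∑ k ∈ Finset.range (n+1), (-1:ℚ)^(n+k) * (n.choose k : ℚ) / (((n:ℚ) + c) - k)
      - (-1:ℚ)^n *
        ∑ k ∈ Finset.range (n+1), (-1:ℚ)^k * (n.choose k : ℚ) * Q.eval (k:ℚ) := by
    rw [Finset.mul_sum, Finset.mul_sum, ← Finset.sum_sub_distrib]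
    refine Finset.sum_congr rfl fun k hk => ?_
    have hk' : k ≤ n := by simpa [Nat.lt_succ_iff] using hk
    have harg : (b : ℚ) + k + 2 - ((n:ℕ)+1 : ℕ) = (k:ℚ) + ((b:ℚ) + 1 - n) := by
      push_cast; ring
    have hden : (((n:ℕ)+1 : ℕ) : ℚ) + (c:ℚ) - k - 1 = ((n:ℚ) + c) - k := by
      push_cast; ring
    rw [poch, harg, ← hPeval, hden, hPk (k:ℚ), pow_add]
    have hne : ((n:ℚ) + c) - k ≠ 0 := by
      have : (k:ℚ) ≤ (n:ℚ) := by exact_mod_cast hk'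
      intro h; nlinarith
    field_simp
    ring
  rw [step1, altsum n Q hQdeg, mul_zero, sub_zero]
  -- reflect the sum and apply sumA
  have hrefl : ∑ k ∈ Finset.range (n+1), (-1:ℚ)^(n+k) * (n.choose k : ℚ) / (((n:ℚ) + c) - k) =
      ∑ k ∈ Finset.range (n+1), (-1:ℚ)^k * (n.choose k : ℚ) / ((c:ℚ) + k) := by
    rw [← Finset.sum_range_reflect]
    refine Finset.sum_congr rfl fun k hk => ?_
    have hk' : k ≤ n := by simpa [Nat.lt_succ_iff] using hk
    simp only [Nat.add_sub_cancel]
    rw [Nat.choose_symm hk', Nat.cast_sub hk']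
    have hsign : (-1:ℚ)^(n + (n - k)) = (-1)^k := by
      rw [show n + (n - k) = 2*(n-k) + k from by omega, pow_add, pow_mul]
      norm_num
    rw [hsign, show ((n:ℚ) + c) - ((n:ℚ) - k) = (c:ℚ) + k from by ring]
  rw [hrefl, sumA n (c:ℚ) hcq]
  -- final factorial bookkeeping
  have hE : (0:ℚ) < (ascPochhammer ℚ (n+1)).eval (c:ℚ) := ascPochhammer_pos _ _ hcq
  have hF1 : ((c-1).factorial : ℚ) * (ascPochhammer ℚ (n+1)).eval (c:ℚ) =
      ((n+c).factorial : ℚ) := by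
    have h := factorial_mul_ascPochhammer ℚ (c-1) (n+1)
    rw [show (((c-1:ℕ):ℚ) + 1) = (c:ℚ) from by
      rw [Nat.cast_sub hc]; ring] at h
    rw [h, show (c-1) + (n+1) = n + c from by omega]
  have hF2 : ((b+c).factorial : ℚ) * P.eval ((n:ℚ) + c) = ((n+b+c).factorial : ℚ) := by
    have h := factorial_mul_ascPochhammer ℚ (b+c) n
    rw [hPeval, show ((n:ℚ) + c) + ((b:ℚ) + 1 - n) = (((b+c:ℕ):ℚ) + 1) from by
      push_cast; ring, h, show (b+c) + n = n + b + c from by omega]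
  rw [← mul_div_assoc, div_eq_div_iff hE.ne' (by positivity)]
  linear_combination ((Nat.factorial n : ℚ) * ((c-1).factorial : ℚ) *
      (ascPochhammer ℚ (n+1)).eval (c:ℚ)) * hF2 -
    ((Nat.factorial n : ℚ) * P.eval ((n:ℚ) + c) * ((b+c).factorial : ℚ)) * hF1
end
end

section
/- Let a, b be nonnegative integers and c a positive integer. Then E(a,b,c,1,0) = M(a,b,c−1), i.e. the number of lozenge tilings of the (a,b,c)-hexagon with an even intrusion of length 1 at position 0 equals MacMahon's product for the (a,b,c−1)-hexagon. Equivalently, E(a,b,c,1,0) = M(a,b,c) · (c)_a / (b+c)_a. -/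
open Finset

noncomputable section

lemma ibinom_pascal (n : ℕ) (k : ℤ) :
    ibinom ((n:ℤ)+1) k = ibinom n k + ibinom n (k-1) := by
  unfold ibinom
  rcases lt_trichotomy k 0 with hk | hk | hk
  · rw [if_neg (by omega), if_neg (by omega), if_neg (by omega)]; ring
  · subst hk
    rw [if_pos ⟨le_refl 0, by omega⟩, if_pos ⟨le_refl 0, by positivity⟩, if_neg (by omega)]
    simp [Int.toNat_natCast]
  · obtain ⟨κ, rfl⟩ : ∃ κ : ℕ, k = (κ:ℤ)+1 := ⟨(k-1).toNat, by omega⟩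
    by_cases h1 : (κ:ℤ)+1 ≤ (n:ℤ)+1
    · rw [if_pos ⟨by omega, h1⟩]
      have ht : (((n:ℤ)+1).toNat) = n+1 := by omega
      have ht2 : (((κ:ℤ)+1).toNat) = κ+1 := by omega
      have ht3 : (((κ:ℤ)+1-1).toNat) = κ := by omega
      rw [ht, ht2, ht3]
      by_cases h2 : (κ:ℤ)+1 ≤ (n:ℤ)
      · rw [if_pos ⟨by omega, h2⟩, if_pos ⟨by omega, by omega⟩]
        rw [Nat.choose_succ_succ]
        simp [Int.toNat_natCast]
        push_cast
        ring
      · have : κ = n := by omega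
        subst this
        rw [if_neg (by omega), if_pos ⟨by omega, by omega⟩]
        simp [Int.toNat_natCast, Nat.choose_succ_self, Nat.choose_self]
    · rw [if_neg (by omega), if_neg (by omega), if_neg (by omega)]; ring

def hcol (b j : ℕ) (x : ℚ) : ℚ := ∏ u ∈ range j, (x + b - u)

def Ncol (a b c r j : ℕ) (x : ℚ) : ℚ :=
  (∏ t ∈ range (a - 1 - j - r), ((c:ℚ) + j + r + 1 + t - x)) * hcol b j x

def Minf (a b : ℕ) : Matrix (Fin a) (Fin a) ℚ := Matrix.of fun i j => hcol b j i

def Nmat (a b c r : ℕ) : Matrix (Fin a) (Fin a) ℚ := Matrix.of fun i j => Ncol a b c r j i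

def ushift (a : ℕ) (g : ℕ → ℚ) : Matrix (Fin a) (Fin a) ℚ :=
  Matrix.of fun k j => if (k:ℕ)+1 = (j:ℕ) then g j else 0

def lshift (a : ℕ) (g : ℕ → ℚ) : Matrix (Fin a) (Fin a) ℚ :=
  Matrix.of fun k j => if (k:ℕ) = (j:ℕ)+1 then g j else 0

lemma mul_ushift (a : ℕ) (M : Matrix (Fin a) (Fin a) ℚ) (g : ℕ → ℚ) (i j : Fin a) :
    (M * ushift a g) i j = if h : 1 ≤ (j:ℕ) then M i ⟨(j:ℕ)-1, by omega⟩ * g j else 0 := by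
  rw [Matrix.mul_apply]
  split
  · next h =>
    rw [Fintype.sum_eq_single (⟨(j:ℕ)-1, by omega⟩ : Fin a)]
    · simp only [ushift, Matrix.of_apply, Fin.val_mk]
      rw [if_pos (by omega)]
    · intro k hk
      have hk' : (k:ℕ) ≠ (j:ℕ)-1 := fun hh => hk (Fin.ext hh)
      simp only [ushift, Matrix.of_apply]
      rw [if_neg (by omega)]; ring
  · next h =>
    apply Finset.sum_eq_zero
    intro k _
    simp only [ushift, Matrix.of_apply]
    rw [if_neg (by omega)]; ring

lemma mul_lshift (a : ℕ) (M : Matrix (Fin a) (Fin a) ℚ) (g : ℕ → ℚ) (i j : Fin a) :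
    (M * lshift a g) i j = if h : (j:ℕ)+1 < a then M i ⟨(j:ℕ)+1, h⟩ * g j else 0 := by
  rw [Matrix.mul_apply]
  split
  · next h =>
    rw [Fintype.sum_eq_single (⟨(j:ℕ)+1, h⟩ : Fin a)]
    · simp only [lshift, Matrix.of_apply, Fin.val_mk]
      simp
    · intro k hk
      have hk' : (k:ℕ) ≠ (j:ℕ)+1 := fun hh => hk (Fin.ext hh)
      simp only [lshift, Matrix.of_apply]
      rw [if_neg (by omega)]; ring
  · next h =>
    apply Finset.sum_eq_zero
    intro k _
    simp only [lshift, Matrix.of_apply]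
    rw [if_neg (by omega)]; ring

lemma det_one_add_ushift (a : ℕ) (g : ℕ → ℚ) : (1 + ushift a g).det = 1 := by
  rw [Matrix.det_of_upperTriangular]
  · apply Finset.prod_eq_one
    intro i _
    simp [ushift, Matrix.one_apply]
  · intro i j hij
    have hij' : (j:ℕ) < (i:ℕ) := hij
    simp only [Matrix.add_apply, ushift, Matrix.one_apply, Matrix.of_apply]
    rw [if_neg (by exact fun hh => absurd (Fin.ext_iff.mp hh) (by omega)), if_neg (by omega)]
    ring

lemma det_one_add_lshift (a : ℕ) (g : ℕ → ℚ) : (1 + lshift a g).det = 1 := by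
  rw [Matrix.det_of_lowerTriangular]
  · apply Finset.prod_eq_one
    intro i _
    simp [lshift, Matrix.one_apply]
  · intro i j hij
    have hij' : (i:ℕ) < (j:ℕ) := hij
    simp only [Matrix.add_apply, lshift, Matrix.one_apply, Matrix.of_apply]
    rw [if_neg (by exact fun hh => absurd (Fin.ext_iff.mp hh) (by omega)), if_neg (by omega)]
    ring

lemma hcol_succ (b m : ℕ) (x : ℚ) : hcol b (m+1) x = hcol b m x * (x + b - m) :=
  Finset.prod_range_succ _ _

lemma hcol_shift (b j : ℕ) (x : ℚ) : hcol b j (x+1) = hcol (b+1) j x := by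
  unfold hcol
  apply Finset.prod_congr rfl
  intro u _
  push_cast
  ring

lemma Minf_det : ∀ a b, (Minf a b).det = ∏ i ∈ range a, (Nat.factorial i : ℚ) := by
  intro a
  induction a with
  | zero => intro b; simp [Matrix.det_isEmpty]
  | succ a' ih =>
    intro b
    set M' : Matrix (Fin (a'+1)) (Fin (a'+1)) ℚ :=
        Matrix.of (fun i j : Fin (a'+1) => if (j:ℕ) = 0 then 1 else (i:ℚ) * hcol b ((j:ℕ)-1) (i:ℚ)) with hM'
    have hM : Minf (a'+1) b * (1 + ushift (a'+1) (fun j => -((b:ℚ) + 1 - j))) = M' := by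
      ext i j
      rw [Matrix.mul_add, Matrix.mul_one, Matrix.add_apply, mul_ushift]
      rcases Nat.eq_zero_or_pos (j:ℕ) with hj | hj
      · rw [dif_neg (by omega)]
        simp only [hM', Matrix.of_apply, if_pos hj]
        simp [Minf, hcol, hj]
      · rw [dif_pos (by omega)]
        obtain ⟨m, hm⟩ : ∃ m, (j:ℕ) = m + 1 := ⟨(j:ℕ)-1, by omega⟩
        simp only [hM', Minf, Matrix.of_apply, Fin.val_mk, hm]
        rw [if_neg (by omega)]
        simp only [Nat.add_sub_cancel, hcol_succ]
        push_cast
        ring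
    have hdet : (Minf (a'+1) b).det = M'.det := by
      rw [← hM, Matrix.det_mul, det_one_add_ushift, mul_one]
    rw [hdet, Matrix.det_succ_row_zero]
    rw [Fintype.sum_eq_single (0 : Fin (a'+1))]
    · simp only [hM', Matrix.of_apply, Fin.val_zero, if_pos rfl, pow_zero, one_mul,
        Fin.succAbove_zero, if_true]
      rw [← hM']
      have hsub : (M'.submatrix Fin.succ Fin.succ) =
          Matrix.of (fun i j : Fin a' => ((i:ℚ)+1) * Minf a' (b+1) i j) := by
        ext i j
        simp only [hM', Matrix.submatrix_apply, Matrix.of_apply, Fin.val_succ]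
        rw [if_neg (by omega)]
        simp only [Nat.add_sub_cancel, Minf, Matrix.of_apply]
        push_cast
        rw [← hcol_shift]
      rw [hsub, Matrix.det_mul_column, ih (b+1)]
      have : (∏ i : Fin a', ((i:ℚ)+1)) = (Nat.factorial a' : ℚ) := by
        rw [Fin.prod_univ_eq_prod_range (fun i => ((i:ℚ)+1)) a']
        rw [← Finset.prod_range_add_one_eq_factorial, Nat.cast_prod]
        push_cast
        rfl
      rw [this, Finset.prod_range_succ]
      ring
    · intro j hj
      have hj' : (j:ℕ) ≠ 0 := fun hh => hj (Fin.ext hh)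
      simp only [hM', Matrix.of_apply, Fin.val_zero, if_neg hj']
      norm_num

lemma prod_indicator_pow (a m : ℕ) (x : ℚ) :
    (∏ j ∈ range a, (if j + m + 1 ≤ a then x else 1)) = x ^ (a - m) := by
  rw [← Finset.prod_filter_mul_prod_filter_not (range a) (fun j => j + m + 1 ≤ a)]
  rw [Finset.prod_congr rfl (fun j hj => if_pos (Finset.mem_filter.mp hj).2),
      Finset.prod_const]
  rw [Finset.prod_congr rfl (fun j hj => if_neg (Finset.mem_filter.mp hj).2),
      Finset.prod_const, one_pow, mul_one]
  congr 1
  have : (range a).filter (fun j => j + m + 1 ≤ a) = range (a - m) := by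
    ext j
    simp only [Finset.mem_filter, Finset.mem_range]
    omega
  rw [this, Finset.card_range]

lemma prod_indicator_ge_pow (a m : ℕ) (x : ℚ) :
    (∏ j ∈ range a, (if m + 1 ≤ j then x else 1)) = x ^ (a - m - 1) := by
  rw [← Finset.prod_filter_mul_prod_filter_not (range a) (fun j => m + 1 ≤ j)]
  rw [Finset.prod_congr rfl (fun j hj => if_pos (Finset.mem_filter.mp hj).2),
      Finset.prod_const]
  rw [Finset.prod_congr rfl (fun j hj => if_neg (Finset.mem_filter.mp hj).2),
      Finset.prod_const, one_pow, mul_one]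
  congr 1
  have : (range a).filter (fun j => m + 1 ≤ j) = Finset.Ico (m+1) a := by
    ext j
    simp only [Finset.mem_filter, Finset.mem_range, Finset.mem_Ico]
    omega
  rw [this, Nat.card_Ico]
  omega

lemma Nmat_eq_Minf (a b c r : ℕ) (h : a ≤ r + 1) : Nmat a b c r = Minf a b := by
  ext i j
  simp only [Nmat, Minf, Ncol, Matrix.of_apply]
  rw [show a - 1 - (j:ℕ) - r = 0 from by omega]
  simp

lemma Nmat_step (a b c r : ℕ) :
    (Nmat a b c r).det = ((b:ℚ)+c+r+1)^(a-1-r) * (Nmat a b c (r+1)).det := by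
  by_cases har : a ≤ r+1
  · rw [Nmat_eq_Minf a b c r har, Nmat_eq_Minf a b c (r+1) (by omega),
      show a-1-r = 0 from by omega, pow_zero, one_mul]
  · push_neg at har
    set g : ℕ → ℚ := fun j => if j+r+2 ≤ a then 1 else 0 with hg
    have key : Nmat a b c r * (1 + lshift a g) =
        Nmat a b c (r+1) *
          Matrix.diagonal (fun j : Fin a => if (j:ℕ)+r+2 ≤ a then ((b:ℚ)+c+r+1) else 1) := by
      ext i j
      rw [Matrix.mul_add, Matrix.mul_one, Matrix.add_apply, mul_lshift, Matrix.mul_diagonal]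
      by_cases hj : (j:ℕ)+r+2 ≤ a
      · rw [dif_pos (by omega), if_pos hj, hg]
        simp only [if_pos hj]
        obtain ⟨L, hL⟩ : ∃ L, a = (j:ℕ)+r+2+L := ⟨a-((j:ℕ)+r+2), by omega⟩
        simp only [Nmat, Ncol, Matrix.of_apply, Fin.val_mk]
        rw [show a-1-(j:ℕ)-r = L+1 from by omega, show a-1-((j:ℕ)+1)-r = L from by omega,
            show a-1-(j:ℕ)-(r+1) = L from by omega]
        rw [Finset.prod_range_succ', hcol_succ]
        have e1 : ∏ t ∈ range L, ((c:ℚ) + ↑j + ↑r + 1 + ↑(t+1) - ↑i) =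
            ∏ t ∈ range L, ((c:ℚ) + ↑j + ↑(r+1) + 1 + ↑t - ↑i) :=
          Finset.prod_congr rfl (fun t _ => by push_cast; ring)
        have e2 : ∏ t ∈ range L, ((c:ℚ) + ↑((j:ℕ)+1) + ↑r + 1 + ↑t - ↑i) =
            ∏ t ∈ range L, ((c:ℚ) + ↑j + ↑(r+1) + 1 + ↑t - ↑i) :=
          Finset.prod_congr rfl (fun t _ => by push_cast; ring)
        rw [e1, e2]
        push_cast
        ring
      · have hgj : g (j:ℕ) = 0 := by rw [hg]; exact if_neg hj
        have heq : Nmat a b c r i j = Nmat a b c (r+1) i j := by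
          simp only [Nmat, Ncol, Matrix.of_apply]
          rw [show a-1-(j:ℕ)-r = 0 from by omega, show a-1-(j:ℕ)-(r+1) = 0 from by omega]
          simp
        rw [if_neg hj, mul_one, ← heq]
        split
        · rw [hgj, mul_zero, add_zero]
        · rw [add_zero]
    have hdet := congrArg Matrix.det key
    rw [Matrix.det_mul, Matrix.det_mul, det_one_add_lshift, mul_one, Matrix.det_diagonal] at hdet
    rw [hdet]
    have : (∏ j : Fin a, (if (j:ℕ)+r+2 ≤ a then ((b:ℚ)+c+r+1) else 1)) =
        ((b:ℚ)+c+r+1) ^ (a - 1 - r) := by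
      rw [Fin.prod_univ_eq_prod_range (fun j => if j+r+2 ≤ a then ((b:ℚ)+c+r+1) else 1) a]
      have := prod_indicator_pow a (r+1) ((b:ℚ)+c+r+1)
      rw [show a - (r+1) = a - 1 - r from by omega] at this
      rw [← this]
      exact Finset.prod_congr rfl (fun j _ => by rw [show j+(r+1)+1 = j+r+2 from by omega])
    rw [this]
    ring

lemma Nmat_det_aux (a b c : ℕ) : ∀ d r, a ≤ r + d →
    (Nmat a b c r).det =
      (∏ i ∈ range a, ∏ t ∈ Ico (min r i) i, ((b:ℚ)+c+t+1)) *
        ∏ i ∈ range a, (Nat.factorial i : ℚ) := by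
  intro d
  induction d with
  | zero =>
    intro r h
    rw [Nmat_eq_Minf a b c r (by omega), Minf_det]
    have h1 : (∏ i ∈ range a, ∏ t ∈ Ico (min r i) i, ((b:ℚ)+c+t+1)) = 1 := by
      apply Finset.prod_eq_one
      intro i hi
      have : min r i = i := min_eq_right (by simp at hi; omega)
      rw [this, Finset.Ico_self, Finset.prod_empty]
    rw [h1, one_mul]
  | succ d ih =>
    intro r h
    by_cases h' : a ≤ r + d
    · exact ih r h'
    · rw [Nmat_step a b c r, ih (r+1) (by omega)]
      have key : (∏ i ∈ range a, ∏ t ∈ Ico (min r i) i, ((b:ℚ)+c+t+1)) =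
          ((b:ℚ)+c+r+1)^(a-1-r) * ∏ i ∈ range a, ∏ t ∈ Ico (min (r+1) i) i, ((b:ℚ)+c+t+1) := by
        have perI : ∀ i ∈ range a, (∏ t ∈ Ico (min r i) i, ((b:ℚ)+c+t+1)) =
            (if r+1 ≤ i then ((b:ℚ)+c+r+1) else 1) *
              ∏ t ∈ Ico (min (r+1) i) i, ((b:ℚ)+c+t+1) := by
          intro i _
          by_cases hi : r + 1 ≤ i
          · rw [if_pos hi, min_eq_left (by omega), min_eq_left (by omega),
              Finset.prod_eq_prod_Ico_succ_bot (by omega)]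
          · rw [if_neg hi, one_mul, min_eq_right (by omega), min_eq_right (by omega)]
        rw [Finset.prod_congr rfl perI, Finset.prod_mul_distrib]
        congr 1
        have := prod_indicator_ge_pow a r ((b:ℚ)+c+r+1)
        rw [show a - r - 1 = a - 1 - r from by omega] at this
        rw [← this]
      rw [key]
      ring

lemma ibinom_def (n k : ℤ) : ibinom n k = if 0 ≤ k ∧ k ≤ n then (n.toNat.choose k.toNat : ℚ) else 0 := rfl

lemma fact_asc (n l : ℕ) : (((n+l).factorial : ℕ) : ℚ) =
    (n.factorial : ℚ) * ∏ t ∈ range l, ((n:ℚ)+1+t) := by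
  induction l with
  | zero => simp
  | succ l ih =>
    rw [show n+(l+1) = (n+l)+1 from rfl, Nat.factorial_succ, Finset.prod_range_succ]
    push_cast
    rw [ih]
    push_cast
    ring

def Car (a b c : ℕ) : Matrix (Fin a) (Fin a) ℚ :=
  Matrix.of fun i j => ibinom ((b:ℤ)+c) ((c:ℤ)+(j:ℕ)-(i:ℕ))

lemma car_scale (a b c : ℕ) (i j : Fin a) :
    Car a b c i j = (((b+c).factorial : ℚ) / (((c+(a-1-(i:ℕ))).factorial : ℚ) * ((b+(i:ℕ)).factorial : ℚ)))
      * Nmat a b c 0 i j := by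
  rw [div_mul_eq_mul_div, eq_div_iff (by positivity)]
  have hia : (i:ℕ) ≤ a - 1 := by omega
  have hja : (j:ℕ) ≤ a - 1 := by omega
  simp only [Car, Nmat, Ncol, Matrix.of_apply, ibinom_def, Nat.cast_zero, add_zero,
    Nat.sub_zero]
  by_cases hneg : (c:ℤ)+(j:ℕ)-(i:ℕ) < 0
  · rw [if_neg (by omega)]
    have hzero : (∏ t ∈ range (a-1-(j:ℕ)), ((c:ℚ)+(j:ℕ)+1+t-(i:ℕ))) = 0 := by
      apply Finset.prod_eq_zero (Finset.mem_range.mpr (show (i:ℕ)-(j:ℕ)-c-1 < a-1-(j:ℕ) from by omega))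
      have hx : ((i:ℕ) - (j:ℕ) - c - 1) + ((j:ℕ)+c+1) = (i:ℕ) := by omega
      have hxq : ((((i:ℕ)-(j:ℕ)-c-1 : ℕ)):ℚ) + (((j:ℕ):ℚ)+(c:ℚ)+1) = ((i:ℕ):ℚ) := by
        exact_mod_cast congrArg (Nat.cast : ℕ → ℚ) hx
      linarith
    rw [hzero]
    ring
  · push_neg at hneg
    by_cases hbig : (b:ℤ)+c < (c:ℤ)+(j:ℕ)-(i:ℕ)
    · rw [if_neg (by omega)]
      have hzero : hcol b (j:ℕ) ((i:ℕ):ℚ) = 0 := by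
        apply Finset.prod_eq_zero (Finset.mem_range.mpr (show b+(i:ℕ) < (j:ℕ) from by omega))
        push_cast
        ring
      rw [hzero]
      ring
    · push_neg at hbig
      rw [if_pos ⟨hneg, by omega⟩]
      obtain ⟨k, hk⟩ : ∃ k : ℕ, (k:ℤ) = (c:ℤ)+(j:ℕ)-(i:ℕ) := ⟨((c:ℤ)+(j:ℕ)-(i:ℕ)).toNat, by omega⟩
      obtain ⟨m, hm⟩ : ∃ m : ℕ, (m:ℤ) = (b:ℤ)+(i:ℕ)-(j:ℕ) := ⟨((b:ℤ)+(i:ℕ)-(j:ℕ)).toNat, by omega⟩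
      have htoNat1 : (((b:ℤ)+c).toNat) = b+c := by omega
      have htoNat2 : (((c:ℤ)+(j:ℕ)-(i:ℕ)).toNat) = k := by omega
      rw [htoNat1, htoNat2]
      have hfac1 : ((c+(a-1-(i:ℕ))).factorial : ℚ) =
          (k.factorial : ℚ) * ∏ t ∈ range (a-1-(j:ℕ)), ((k:ℚ)+1+t) := by
        rw [show c+(a-1-(i:ℕ)) = k+(a-1-(j:ℕ)) from by omega]
        exact fact_asc k (a-1-(j:ℕ))
      have hfac2 : ((b+(i:ℕ)).factorial : ℚ) =
          (m.factorial : ℚ) * ∏ t ∈ range (j:ℕ), ((m:ℚ)+1+t) := by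
        rw [show b+(i:ℕ) = m+(j:ℕ) from by omega]
        exact fact_asc m (j:ℕ)
      have hchoose : ((b+c).factorial : ℚ) =
          ((b+c).choose k : ℚ) * (k.factorial : ℚ) * (m.factorial : ℚ) := by
        have hkle : k ≤ b+c := by omega
        have := Nat.choose_mul_factorial_mul_factorial hkle
        rw [show b+c-k = m from by omega] at this
        rw [← this]
        push_cast
        ring
      have hprod1 : (∏ t ∈ range (a-1-(j:ℕ)), ((c:ℚ)+(j:ℕ)+1+t-(i:ℕ))) =
          ∏ t ∈ range (a-1-(j:ℕ)), ((k:ℚ)+1+t) := by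
        apply Finset.prod_congr rfl
        intro t _
        have : ((k:ℚ)) = (c:ℚ)+(j:ℕ)-(i:ℕ) := by exact_mod_cast congrArg (Int.cast : ℤ → ℚ) hk
        rw [this]
        ring
      have hprod2 : hcol b (j:ℕ) ((i:ℕ):ℚ) = ∏ t ∈ range (j:ℕ), ((m:ℚ)+1+t) := by
        unfold hcol
        rw [← Finset.prod_range_reflect (fun t => ((m:ℚ)+1+t)) (j:ℕ)]
        apply Finset.prod_congr rfl
        intro u hu
        have hu' : u < (j:ℕ) := Finset.mem_range.mp hu
        have hm' : ((m:ℚ)) = (b:ℚ)+(i:ℕ)-(j:ℕ) := by exact_mod_cast congrArg (Int.cast : ℤ → ℚ) hm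
        have hcast : (((j:ℕ)-1-u : ℕ) : ℚ) = (j:ℕ)-1-u := by
          push_cast [Nat.cast_sub (show u ≤ (j:ℕ)-1 from by omega),
            Nat.cast_sub (show 1 ≤ (j:ℕ) from by omega)]
          ring
        rw [hm', hcast]
        ring
      rw [hfac1, hfac2, hchoose, hprod1, hprod2]
      ring

lemma car_det (a b c : ℕ) : (Car a b c).det = macmahon a b c := by
  have hsc : Car a b c = Matrix.of (fun i j : Fin a =>
      (((b+c).factorial : ℚ) / (((c+(a-1-(i:ℕ))).factorial : ℚ) * ((b+(i:ℕ)).factorial : ℚ)))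
        * Nmat a b c 0 i j) := by
    ext i j
    exact car_scale a b c i j
  rw [hsc, Matrix.det_mul_column, Nmat_det_aux a b c a 0 (by omega)]
  have hmin : (∏ i ∈ range a, ∏ t ∈ Ico (min 0 i) i, ((b:ℚ)+c+t+1)) =
      ∏ i ∈ range a, ∏ t ∈ range i, ((b:ℚ)+c+t+1) := by
    apply Finset.prod_congr rfl
    intro i _
    rw [Nat.zero_min, ← Finset.range_eq_Ico]
  rw [hmin]
  rw [Fin.prod_univ_eq_prod_range (fun i =>
      (((b+c).factorial : ℚ) / (((c+(a-1-i)).factorial : ℚ) * ((b+i).factorial : ℚ)))) a]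
  rw [Finset.prod_div_distrib, Finset.prod_mul_distrib]
  have hrefl : (∏ i ∈ range a, ((c+(a-1-i)).factorial:ℚ)) = ∏ i ∈ range a, ((c+i).factorial:ℚ) :=
    Finset.prod_range_reflect (fun i => ((c+i).factorial : ℚ)) a
  rw [hrefl]
  rw [div_mul_eq_mul_div, div_eq_iff (by positivity)]
  unfold macmahon
  simp only [← Finset.prod_mul_distrib]
  apply Finset.prod_congr rfl
  intro i _
  have hY : ((b+c).factorial : ℚ) * ∏ t ∈ range i, ((b:ℚ)+c+t+1) = ((b+c+i).factorial : ℚ) := by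
    rw [fact_asc (b+c) i]
    push_cast
    ring_nf
  have h1 : ((b+i).factorial : ℚ) ≠ 0 := by positivity
  have h2 : ((c+i).factorial : ℚ) ≠ 0 := by positivity
  field_simp
  exact hY

lemma alt_sum (n : ℕ) (m : ℤ) : ∀ i : ℕ,
    ∑ k ∈ range (i+1), (-1:ℚ)^(i+k) * ibinom ((n:ℤ)+1) (m+1-(k:ℕ)) =
      ibinom n (m-(i:ℕ)) + (-1:ℚ)^i * ibinom n (m+1) := by
  intro i
  induction i with
  | zero =>
    rw [Finset.sum_range_one]
    norm_num
    rw [ibinom_pascal n (m+1), show m+1-1 = m from by ring]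
    ring
  | succ i ih =>
    rw [Finset.sum_range_succ]
    have hs : ∑ k ∈ range (i+1), (-1:ℚ)^(i+1+k) * ibinom ((n:ℤ)+1) (m+1-(k:ℕ))
        = -∑ k ∈ range (i+1), (-1:ℚ)^(i+k) * ibinom ((n:ℤ)+1) (m+1-(k:ℕ)) := by
      rw [← Finset.sum_neg_distrib]
      apply Finset.sum_congr rfl
      intro k _
      rw [show i+1+k = (i+k)+1 from by omega, pow_succ]
      ring
    rw [hs, ih]
    rw [show m+1-((i+1:ℕ):ℤ) = m-(i:ℕ) from by push_cast; ring]
    rw [ibinom_pascal n (m-(i:ℕ))]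
    rw [show m-(i:ℕ)-1 = m-((i+1:ℕ):ℤ) from by push_cast; ring]
    rw [show i+1+(i+1) = 2*(i+1) from by omega, pow_mul]
    norm_num
    rw [pow_succ]
    ring

lemma E_eq_car (a b c' : ℕ) : E a b (c'+1) 1 0 = (Car a b c').det := by
  unfold E
  rw [← Matrix.det_submatrix_equiv_self (finSumFinEquiv : Fin a ⊕ Fin 1 ≃ Fin (a+1))
    (Qmat a b (c'+1) 1 0)]
  set u : Matrix (Fin a) (Fin 1) ℚ := Matrix.of fun i _ => if (i:ℕ) = 0 then 1 else 0 with hu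
  set v : Matrix (Fin 1) (Fin a) ℚ :=
    Matrix.of fun _ j => ibinom ((b:ℤ)+(c':ℕ)) ((c':ℤ)+1+(j:ℕ)) with hv
  set w : Matrix (Fin 1) (Fin 1) ℚ := Matrix.of fun _ _ => 1 with hw
  have hQ : (Qmat a b (c'+1) 1 0).submatrix finSumFinEquiv finSumFinEquiv =
      Matrix.fromBlocks (Car a b (c'+1)) u v w := by
    ext i j
    cases i with
    | inl i =>
      cases j with
      | inl j =>
        simp only [Matrix.submatrix_apply, Matrix.fromBlocks_apply₁₁, finSumFinEquiv_apply_left,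
          Qmat, Car, Matrix.of_apply, Fin.coe_castAdd]
        rw [if_pos (i.isLt), if_pos (j.isLt)]
        congr 1 <;> push_cast <;> ring
      | inr j =>
        simp only [Matrix.submatrix_apply, Matrix.fromBlocks_apply₁₂, finSumFinEquiv_apply_left,
          finSumFinEquiv_apply_right, Qmat, Matrix.of_apply, Fin.coe_castAdd, Fin.coe_natAdd]
        rw [if_pos (i.isLt), if_neg (by omega), hu]
        have hj : (j:ℕ) = 0 := by omega
        rw [hj]
        have h1 : (2 * (((a + 0 :ℕ) : ℤ) - (a:ℕ) + 1) - 1) = 1 := by push_cast; ring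
        have h2 : ((((a + 0:ℕ) : ℤ) - (a:ℕ) + 1) - (((i:ℕ):ℤ) + 1) + 0) = -((i:ℕ):ℤ) := by
          push_cast; ring
        rw [h1, h2]
        simp only [Matrix.of_apply, ibinom_def]
        by_cases hi : (i:ℕ) = 0
        · rw [if_pos (by omega), if_pos hi, hi]
          norm_num
        · rw [if_neg (by omega), if_neg hi]
    | inr i =>
      have hi0 : (i:ℕ) = 0 := by omega
      cases j with
      | inl j =>
        simp only [Matrix.submatrix_apply, Matrix.fromBlocks_apply₂₁, finSumFinEquiv_apply_left,
          finSumFinEquiv_apply_right, Qmat, Matrix.of_apply, Fin.coe_castAdd, Fin.coe_natAdd, hi0]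
        rw [if_neg (by omega), if_pos (j.isLt), hv]
        simp only [Matrix.of_apply]
        congr 1 <;> push_cast <;> ring
      | inr j =>
        have hj0 : (j:ℕ) = 0 := by omega
        simp only [Matrix.submatrix_apply, Matrix.fromBlocks_apply₂₂, finSumFinEquiv_apply_right,
          Qmat, Matrix.of_apply, Fin.coe_natAdd, hi0, hj0]
        rw [if_neg (by omega), if_neg (by omega), hw]
        have h1 : (2 * (((a + 0 :ℕ) : ℤ) - ((a + 0 :ℕ) : ℤ))) = 0 := by ring
        have h2 : (((a + 0 :ℕ) : ℤ) - ((a + 0 :ℕ) : ℤ)) = 0 := by ring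
        rw [h1, h2]
        simp [ibinom_def]
  rw [hQ]
  set Lt : Matrix (Fin a) (Fin a) ℚ :=
    Matrix.of (fun i k => if (k:ℕ) ≤ (i:ℕ) then (-1:ℚ)^((i:ℕ)+(k:ℕ)) else 0) with hLt
  set w0 : Matrix (Fin a) (Fin 1) ℚ := Matrix.of (fun i _ => (-1:ℚ)^((i:ℕ)+1)) with hw0
  have hdetL : (Matrix.fromBlocks Lt w0 0 1).det = 1 := by
    rw [Matrix.det_fromBlocks_zero₂₁, Matrix.det_one, mul_one]
    rw [Matrix.det_of_lowerTriangular]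
    · apply Finset.prod_eq_one
      intro i _
      simp only [hLt, Matrix.of_apply, le_refl, if_pos]
      rw [show (i:ℕ)+(i:ℕ) = 2*(i:ℕ) from by omega, pow_mul]
      norm_num
    · intro i j hij
      have hij' : (i:ℕ) < (j:ℕ) := hij
      simp only [hLt, Matrix.of_apply]
      rw [if_neg (by omega)]
  have h11 : Lt * Car a b (c'+1) + w0 * v = Car a b c' := by
    ext i j
    rw [Matrix.add_apply, Matrix.mul_apply, Matrix.mul_apply, Fin.sum_univ_one]
    set f : ℕ → ℚ := fun k => (if k ≤ (i:ℕ) then (-1:ℚ)^((i:ℕ)+k) else 0) *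
      ibinom (((b+c':ℕ):ℤ)+1) ((((c':ℕ):ℤ)+((j:ℕ):ℤ))+1-(k:ℕ)) with hf
    have hterm : ∀ k : Fin a, Lt i k * Car a b (c'+1) k j = f (k:ℕ) := by
      intro k
      rw [hf]
      simp only [hLt, Car, Matrix.of_apply]
      congr 2 <;> push_cast <;> ring
    rw [Finset.sum_congr rfl (fun k _ => hterm k), Fin.sum_univ_eq_sum_range f a]
    have hsub : ∑ k ∈ range a, f k = ∑ k ∈ range ((i:ℕ)+1), f k := by
      symm
      apply Finset.sum_subset (Finset.range_subset_range.mpr (show (i:ℕ)+1 ≤ a from by omega))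
      intro x _ hx
      simp only [hf]
      rw [if_neg (by simp at hx; omega)]
      ring
    rw [hsub]
    have hpos : ∑ k ∈ range ((i:ℕ)+1), f k =
        ∑ k ∈ range ((i:ℕ)+1), (-1:ℚ)^((i:ℕ)+k) *
          ibinom (((b+c':ℕ):ℤ)+1) ((((c':ℕ):ℤ)+((j:ℕ):ℤ))+1-(k:ℕ)) := by
      apply Finset.sum_congr rfl
      intro k hk
      simp only [hf]
      rw [if_pos (by simp at hk; omega)]
    rw [hpos, alt_sum (b+c') (((c':ℕ):ℤ)+((j:ℕ):ℤ)) (i:ℕ)]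
    simp only [hw0, hv, Car, Matrix.of_apply]
    have e1 : ibinom ((b+c':ℕ):ℤ) ((((c':ℕ):ℤ)+((j:ℕ):ℤ))-((i:ℕ):ℤ)) =
        ibinom ((b:ℤ)+(c':ℕ)) (((c':ℕ):ℤ)+((j:ℕ):ℤ)-((i:ℕ):ℤ)) := by
      congr 1 <;> (push_cast; try ring)
    have e2 : ibinom ((b+c':ℕ):ℤ) ((((c':ℕ):ℤ)+((j:ℕ):ℤ))+1) =
        ibinom ((b:ℤ)+(c':ℕ)) (((c':ℕ):ℤ)+1+((j:ℕ):ℤ)) := by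
      congr 1 <;> (push_cast; try ring)
    rw [e1, e2, pow_succ]
    ring
  have h12 : Lt * u + w0 * w = 0 := by
    ext i j
    rw [Matrix.add_apply, Matrix.mul_apply, Matrix.mul_apply, Fin.sum_univ_one]
    have ha : 0 < a := i.pos
    rw [Fintype.sum_eq_single (⟨0, ha⟩ : Fin a)]
    · have hle : (⟨0, ha⟩ : Fin a) ≤ i := by simp [Fin.le_def]
      simp [hLt, hu, hw0, hw, pow_succ, if_pos hle]
    · intro k hk
      have hk' : (k:ℕ) ≠ 0 := fun hh => hk (Fin.ext hh)
      simp only [hLt, hu, Matrix.of_apply]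
      rw [if_neg hk']
      ring
  have hstep : (Matrix.fromBlocks (Car a b (c'+1)) u v w).det
      = (Matrix.fromBlocks (Car a b c') 0 v w).det := by
    have hmul : Matrix.fromBlocks Lt w0 0 1 * Matrix.fromBlocks (Car a b (c'+1)) u v w =
        Matrix.fromBlocks (Car a b c') 0 v w := by
      rw [Matrix.fromBlocks_multiply, h11, h12]
      rw [Matrix.zero_mul, Matrix.one_mul, Matrix.zero_mul, Matrix.one_mul, zero_add, zero_add]
    rw [← hmul, Matrix.det_mul, hdetL, one_mul]
  rw [hstep, Matrix.det_fromBlocks_zero₁₂]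
  have hwdet : w.det = 1 := by
    rw [Matrix.det_fin_one, hw]
    rfl
  rw [hwdet, mul_one]

lemma poch_eq_prod (x : ℚ) (n : ℕ) : poch x n = ∏ i ∈ range n, (x + i) := by
  induction n with
  | zero => simp [poch]
  | succ n ih =>
    rw [poch, ascPochhammer_succ_eval, ← poch, ih, Finset.prod_range_succ]

/-- With an even intrusion of length `1` at position `0`, the count equals MacMahon's
product for the `(a,b,c-1)`-hexagon. -/
theorem E_d_one_p_zero (a b c : ℕ) (hc : 0 < c) :
    E a b c 1 0 = macmahon a b (c - 1) ∧
    E a b c 1 0 = macmahon a b c * poch (c : ℚ) a / poch ((b : ℚ) + c) a := by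
  obtain ⟨c', rfl⟩ : ∃ c', c = c' + 1 := ⟨c - 1, by omega⟩
  have h1 : E a b (c'+1) 1 0 = macmahon a b c' := by
    rw [E_eq_car, car_det]
  constructor
  · simpa using h1
  · rw [h1]
    have hp1 : poch ((c'+1 : ℕ) : ℚ) a = ∏ i ∈ range a, ((c':ℚ)+1+i) := by
      rw [poch_eq_prod]
      exact Finset.prod_congr rfl (fun i _ => by push_cast; ring)
    have hp2 : poch ((b : ℚ) + (c'+1 : ℕ)) a = ∏ i ∈ range a, ((b:ℚ)+c'+1+i) := by
      rw [poch_eq_prod]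
      exact Finset.prod_congr rfl (fun i _ => by push_cast; ring)
    rw [hp1, hp2, eq_div_iff (by positivity)]
    unfold macmahon
    rw [← Finset.prod_mul_distrib, ← Finset.prod_mul_distrib]
    apply Finset.prod_congr rfl
    intro i _
    have hb1 : ((b+(c'+1)+i).factorial : ℚ) = ((b+c'+i).factorial : ℚ) * ((b:ℚ)+c'+1+i) := by
      rw [show b+(c'+1)+i = (b+c'+i)+1 from by omega, Nat.factorial_succ]
      push_cast
      ring
    have hc1 : (((c'+1)+i).factorial : ℚ) = ((c'+i).factorial : ℚ) * ((c':ℚ)+1+i) := by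
      rw [show (c'+1)+i = (c'+i)+1 from by omega, Nat.factorial_succ]
      push_cast
      ring
    rw [show b+(c'+1) = b+c'+1 from by omega] at *
    rw [hb1]
    rw [show (c'+1)+i = c'+1+i from rfl] at hc1
    rw [hc1]
    have n1 : ((b+i).factorial : ℚ) ≠ 0 := by positivity
    have n2 : ((c'+i).factorial : ℚ) ≠ 0 := by positivity
    have n3 : ((c':ℚ)+1+i) ≠ 0 := by positivity
    have n4 : ((b:ℚ)+c'+1+i) ≠ 0 := by positivity
    field_simp
end
end

section
/- Let a, b, c be nonnegative integers with a ≤ b + 1. Define the a×a matrices over ℚ, indexed by i,j ∈ {1,…,a}: M_{i,j} := C(b+c, b+i−j); L_{i,j} := (−1)^{i+j} · C(i−1, j−1) · (c)_{i−j} / (b+j)_{i−j} for i ≥ j and L_{i,j} := 0 for i < j; U_{i,j} := (j−i+1)_{i−1} · b!·(b+c+i−1)! / ( (b+i−1)!·(c+j−1)!·(b+i−j)! ). Then U = L·M. In particular, L is lower triangular with 1's on the diagonal, U is upper triangular, and det M = det U = ∏_{i=0}^{a−1} i!·(b+c+i)!/((b+i)!·(c+i)!). -/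
open Finset

noncomputable section

set_option maxHeartbeats 1600000

-- helper lemmas
lemma poch_zero (x : ℚ) : poch x 0 = 1 := by simp [poch]

lemma poch_succ (x : ℚ) (n : ℕ) : poch x (n + 1) = poch x n * (x + n) :=
  ascPochhammer_succ_eval n x

lemma poch_pos {x : ℚ} (h : 0 < x) (n : ℕ) : 0 < poch x n :=
  ascPochhammer_pos n x h

lemma poch_shift (x : ℚ) (n : ℕ) : x * poch (x + 1) n = poch x n * (x + n) := by
  induction n with
  | zero => simp [poch_zero]
  | succ n ih =>
      rw [poch_succ, poch_succ]
      push_cast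
      linear_combination (x + 1 + (n : ℚ)) * ih

lemma poch_succ_left (x : ℚ) (n : ℕ) : poch x (n + 1) = x * poch (x + 1) n := by
  have h1 := poch_shift x n
  have h2 := poch_succ x n
  linarith

lemma poch_eq_zero {x : ℚ} {n m : ℕ} (hm : m < n) (hx : x + m = 0) : poch x n = 0 := by
  induction n with
  | zero => omega
  | succ n ih =>
      rw [poch_succ]
      rcases Nat.lt_succ_iff_lt_or_eq.mp hm with h | h
      · rw [ih h, zero_mul]
      · subst h; rw [hx, mul_zero]

lemma ibinom_nat (n k : ℕ) (h : k ≤ n) : ibinom (n : ℤ) (k : ℤ) = (n.choose k : ℚ) := by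
  rw [ibinom, if_pos ⟨Int.natCast_nonneg k, by exact_mod_cast h⟩]
  simp

lemma ibinom_of_gt {n k : ℤ} (h : n < k) : ibinom n k = 0 := by
  rw [ibinom, if_neg]; omega

-- the step ratio lemma for the binomial factor
lemma ibinom_step (b c j k : ℕ) (hj : j ≤ b) :
    ibinom ((b : ℤ) + c) ((b : ℤ) + (k + 1) - j) * ((b : ℚ) + k + 1 - j)
      = ibinom ((b : ℤ) + c) ((b : ℤ) + k - j) * ((c : ℚ) + j - k) := by
  have e1 : (b : ℤ) + k - j = ((b + k - j : ℕ) : ℤ) := by push_cast [Nat.cast_sub]; omega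
  have e2 : (b : ℤ) + (k + 1) - j = ((b + k - j + 1 : ℕ) : ℤ) := by push_cast [Nat.cast_sub]; omega
  rw [e1, e2]
  rcases lt_or_ge k (c + j) with h | h
  · have h1 : b + k - j + 1 ≤ b + c := by omega
    have h2 : b + k - j ≤ b + c := by omega
    rw [show ((b:ℤ)+c) = ((b+c:ℕ):ℤ) by push_cast; ring, ibinom_nat _ _ h1, ibinom_nat _ _ h2]
    have key := Nat.choose_succ_right_eq (b + c) (b + k - j)
    have e3 : b + c - (b + k - j) = c + j - k := by omega
    rw [e3] at key
    have e4 : ((b + k - j + 1 : ℕ) : ℚ) = (b : ℚ) + k + 1 - j := by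
      push_cast [Nat.cast_sub (by omega : j ≤ b + k)]; ring
    have e5 : ((c + j - k : ℕ) : ℚ) = (c : ℚ) + j - k := by
      push_cast [Nat.cast_sub (by omega : k ≤ c + j)]; ring
    calc ((b + c).choose (b + k - j + 1) : ℚ) * ((b : ℚ) + k + 1 - j)
        = (((b + c).choose (b + k - j + 1) * (b + k - j + 1) : ℕ) : ℚ) := by
          rw [← e4]; push_cast; ring
      _ = (((b + c).choose (b + k - j) * (c + j - k) : ℕ) : ℚ) := by rw [key]
      _ = ((b + c).choose (b + k - j) : ℚ) * ((c : ℚ) + j - k) := by rw [← e5]; push_cast; ring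
  · rcases eq_or_lt_of_le h with h' | h'
    · have : ibinom ((b:ℤ)+c) ((b + k - j + 1 : ℕ) : ℤ) = 0 := by
        apply ibinom_of_gt; push_cast [Nat.cast_sub (by omega : j ≤ b + k)]; omega
      rw [this, zero_mul]
      have : (c : ℚ) + j - k = 0 := by
        have : (k : ℚ) = (c : ℚ) + j := by exact_mod_cast congrArg (Nat.cast (R := ℚ)) h'.symm
        rw [this]; ring
      rw [this, mul_zero]
    · have z1 : ibinom ((b:ℤ)+c) ((b + k - j + 1 : ℕ) : ℤ) = 0 := by
        apply ibinom_of_gt; push_cast [Nat.cast_sub (by omega : j ≤ b + k)]; omega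
      have z2 : ibinom ((b:ℤ)+c) ((b + k - j : ℕ) : ℤ) = 0 := by
        apply ibinom_of_gt; push_cast [Nat.cast_sub (by omega : j ≤ b + k)]; omega
      rw [z1, z2, zero_mul, zero_mul]

def Tf (b c j i k : ℕ) : ℚ :=
  (-1 : ℚ) ^ (i + k) * (i.choose k : ℚ) * poch (c : ℚ) (i - k) / poch ((b : ℚ) + k + 1) (i - k) *
    ibinom ((b : ℤ) + c) ((b : ℤ) + k - j)

def Rhs (b c j i : ℕ) : ℚ :=
  poch ((j : ℚ) - (i : ℚ) + 1) i * (Nat.factorial b : ℚ) * (Nat.factorial (b + c + i) : ℚ) /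
    ((Nat.factorial (b + i) : ℚ) * (Nat.factorial (c + j) : ℚ) * (Nat.factorial (b + i - j) : ℚ))

lemma Tf_eq_zero {b c j i k : ℕ} (h : i < k) : Tf b c j i k = 0 := by
  simp only [Tf]
  rw [Nat.choose_eq_zero_of_lt h]
  simp

lemma wz (b c j i k : ℕ) (hj : j ≤ b) (hk : k ≤ i) :
    Tf b c j (i + 1) k
      - ((j : ℚ) - i) * ((b : ℚ) + c + i + 1) / (((b : ℚ) + i + 1) * ((b : ℚ) + i + 1 - j))
          * Tf b c j i k
    = (-((k : ℚ) + 1) * ((k : ℚ) + 1 + b - j) / (((i : ℚ) + 1) * ((b : ℚ) + i + 1 - j)))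
          * Tf b c j (i + 1) (k + 1)
      - (-(k : ℚ) * ((k : ℚ) + b - j) / (((i : ℚ) + 1) * ((b : ℚ) + i + 1 - j)))
          * Tf b c j (i + 1) k := by
  have hjQ : (j : ℚ) ≤ b := by exact_mod_cast hj
  have hkQ : (k : ℚ) ≤ i := by exact_mod_cast hk
  have hb0 : (0 : ℚ) ≤ b := Nat.cast_nonneg b
  have hi0 : (0 : ℚ) ≤ i := Nat.cast_nonneg i
  have hk0 : (0 : ℚ) ≤ k := Nat.cast_nonneg k
  have h1 : ((b : ℚ) + i + 1 - j) ≠ 0 := by nlinarith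
  have h2 : ((b : ℚ) + k + 1 - j) ≠ 0 := by nlinarith
  have h3 : ((b : ℚ) + k + 1) ≠ 0 := by nlinarith
  have h4 : ((i : ℚ) + 1 - k) ≠ 0 := by nlinarith
  have h5 : ((i : ℚ) + 1) ≠ 0 := by nlinarith
  have h6 : ((k : ℚ) + 1) ≠ 0 := by nlinarith
  have hQ : poch ((b : ℚ) + k + 1) (i - k) ≠ 0 := (poch_pos (by nlinarith) _).ne'
  -- choose relations
  have hc1 : ((i + 1).choose (k + 1) : ℚ) * ((k : ℚ) + 1) = ((i : ℚ) + 1) * (i.choose k : ℚ) := by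
    have := Nat.add_one_mul_choose_eq i k
    have : ((Nat.succ i * i.choose k : ℕ) : ℚ) = (((i + 1).choose (k + 1) * (k + 1) : ℕ) : ℚ) := by
      exact_mod_cast congrArg (Nat.cast (R := ℚ)) this
    push_cast at this
    linarith
  have hc2 : ((i + 1).choose k : ℚ) * ((i : ℚ) + 1 - k) = ((i : ℚ) + 1) * (i.choose k : ℚ) := by
    have h := Nat.choose_succ_right_eq (i + 1) k
    have hcast : (((i + 1).choose (k + 1) * (k + 1) : ℕ) : ℚ)
        = (((i + 1).choose k * (i + 1 - k) : ℕ) : ℚ) := by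
      exact_mod_cast congrArg (Nat.cast (R := ℚ)) h
    push_cast [Nat.cast_sub (by omega : k ≤ i + 1)] at hcast
    push_cast at hc1 ⊢
    linarith [hc1, hcast]
  -- index arithmetic
  have e1 : i + 1 - k = (i - k) + 1 := by omega
  have e2 : i + 1 - (k + 1) = i - k := by omega
  have ecast : ((i - k : ℕ) : ℚ) = (i : ℚ) - k := by
    push_cast [Nat.cast_sub hk]; ring
  -- unfold and rewrite
  simp only [Tf]
  rw [e1, e2]
  rw [show (i + 1) + k = (i + k) + 1 by ring, show (i + 1) + (k + 1) = (i + k) + 2 by ring,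
    pow_succ, pow_succ, pow_succ]
  rw [poch_succ ((c : ℚ)) (i - k), poch_succ ((b : ℚ) + k + 1) (i - k)]
  have hshift : poch ((b : ℚ) + (k + 1 : ℕ) + 1) (i - k)
      = poch ((b : ℚ) + k + 1) (i - k) * ((b : ℚ) + k + 1 + ((i : ℚ) - k)) / ((b : ℚ) + k + 1) := by
    have := poch_shift ((b : ℚ) + k + 1) (i - k)
    rw [ecast] at this
    push_cast
    rw [show (b : ℚ) + (k + 1) + 1 = ((b : ℚ) + k + 1) + 1 by ring]
    field_simp
    linarith [this]
  rw [hshift]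
  have hstep : ibinom ((b : ℤ) + c) ((b : ℤ) + (k + 1 : ℕ) - j)
      = ibinom ((b : ℤ) + c) ((b : ℤ) + k - j) * (((c : ℚ) + j - k) / ((b : ℚ) + k + 1 - j)) := by
    have := ibinom_step b c j k hj
    push_cast
    field_simp
    linarith [this]
  rw [hstep, ecast]
  push_cast
  -- now a pure rational-function identity in the atoms
  set X := ibinom ((b : ℤ) + c) ((b : ℤ) + k - j) with hX
  set P := poch (c : ℚ) (i - k) with hP
  set Q := poch ((b : ℚ) + k + 1) (i - k) with hQdef
  set s := (-1 : ℚ) ^ (i + k) with hs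
  have hC1 : ((i + 1).choose k : ℚ) = ((i : ℚ) + 1) * (i.choose k : ℚ) / ((i : ℚ) + 1 - k) := by
    field_simp; linarith [hc2]
  have hC2 : ((i + 1).choose (k + 1) : ℚ) = ((i : ℚ) + 1) * (i.choose k : ℚ) / ((k : ℚ) + 1) := by
    field_simp; linarith [hc1]
  push_cast at hC1 hC2
  rw [hC1, hC2]
  rw [show (b : ℚ) + ↑k + 1 + ((i:ℚ) - ↑k) = (b : ℚ) + ↑i + 1 from by ring]
  have hbi1 : ((b:ℚ) + ↑i + 1) ≠ 0 := by nlinarith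
  set W : ℚ := s * (i.choose k : ℚ) * P * X / (Q * ((b:ℚ) + ↑i + 1)) with hW
  have hT0 : s * ↑(i.choose k) * P / Q * X = W * ((b:ℚ) + ↑i + 1) := by
    rw [hW]; field_simp
  have hT1 : s * -1 * ((↑i + 1) * ↑(i.choose k) / (↑i + 1 - ↑k)) * (P * (↑c + (↑i - ↑k))) /
        (Q * (↑b + ↑i + 1)) * X
      = W * (-(↑i + 1) * (↑c + (↑i - ↑k)) / (↑i + 1 - ↑k)) := by
    rw [hW]; field_simp
  have hT2 : s * -1 * -1 * ((↑i + 1) * ↑(i.choose k) / (↑k + 1)) * P /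
        (Q * (↑b + ↑i + 1) / (↑b + ↑k + 1)) * (X * ((↑c + ↑j - ↑k) / (↑b + ↑k + 1 - ↑j)))
      = W * ((↑i + 1) * (↑b + ↑k + 1) * (↑c + ↑j - ↑k) / ((↑k + 1) * (↑b + ↑k + 1 - ↑j))) := by
    rw [hW]; field_simp
  rw [hT0, hT1, hT2]
  have core : (-(↑i + 1) * (↑c + ((i:ℚ) - ↑k)) / (↑i + 1 - ↑k))
      - (↑j - ↑i) * (↑b + ↑c + ↑i + 1) / ((↑b + ↑i + 1) * (↑b + ↑i + 1 - ↑j)) * ((b:ℚ) + ↑i + 1)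
      = -(↑k + 1) * (↑k + 1 + ↑b - ↑j) / ((↑i + 1) * (↑b + ↑i + 1 - ↑j)) *
          ((↑i + 1) * (↑b + ↑k + 1) * (↑c + ↑j - ↑k) / ((↑k + 1) * (↑b + ↑k + 1 - ↑j)))
        - -↑k * (↑k + ↑b - ↑j) / ((↑i + 1) * (↑b + ↑i + 1 - ↑j)) *
          (-(↑i + 1) * (↑c + ((i:ℚ) - ↑k)) / (↑i + 1 - ↑k)) := by
    field_simp
    ring
  linear_combination W * core

lemma rho_step (b c j i : ℕ) (hj : j ≤ b) :
    ((j : ℚ) - i) * ((b : ℚ) + c + i + 1) / (((b : ℚ) + i + 1) * ((b : ℚ) + i + 1 - j))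
      * Rhs b c j i = Rhs b c j (i + 1) := by
  have hjQ : (j : ℚ) ≤ b := by exact_mod_cast hj
  have hb0 : (0 : ℚ) ≤ b := Nat.cast_nonneg b
  have hi0 : (0 : ℚ) ≤ i := Nat.cast_nonneg i
  have h1 : ((b : ℚ) + i + 1 - j) ≠ 0 := by nlinarith
  have h2 : ((b : ℚ) + i + 1) ≠ 0 := by nlinarith
  simp only [Rhs]
  rw [show b + c + (i + 1) = (b + c + i) + 1 from by ring,
    show b + (i + 1) = (b + i) + 1 from by ring,
    show b + i + 1 - j = (b + i - j) + 1 from by omega,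
    Nat.factorial_succ, Nat.factorial_succ, Nat.factorial_succ]
  have e4 : ((b + i - j : ℕ) : ℚ) = (b : ℚ) + i - j := by
    push_cast [Nat.cast_sub (by omega : j ≤ b + i)]; ring
  have hpoch : poch ((j : ℚ) - ((i + 1 : ℕ) : ℚ) + 1) (i + 1)
      = ((j : ℚ) - i) * poch ((j : ℚ) - i + 1) i := by
    rw [show (j : ℚ) - ((i + 1 : ℕ) : ℚ) + 1 = (j : ℚ) - i by push_cast; ring,
      poch_succ_left]
  rw [hpoch]
  push_cast [Nat.cast_sub (show j ≤ b + i by omega)]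
  have f1 : ((b + c + i).factorial : ℚ) ≠ 0 := Nat.cast_ne_zero.2 (Nat.factorial_ne_zero _)
  have f2 : ((b + i).factorial : ℚ) ≠ 0 := Nat.cast_ne_zero.2 (Nat.factorial_ne_zero _)
  have f3 : ((c + j).factorial : ℚ) ≠ 0 := Nat.cast_ne_zero.2 (Nat.factorial_ne_zero _)
  have f4 : ((b + i - j).factorial : ℚ) ≠ 0 := Nat.cast_ne_zero.2 (Nat.factorial_ne_zero _)
  have h3 : (b : ℚ) + i - j + 1 ≠ 0 := by nlinarith
  push_cast
  field_simp
  ring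

lemma key (b c j : ℕ) (hj : j ≤ b) :
    ∀ i, i ≤ b → ∑ k ∈ range (i + 1), Tf b c j i k = Rhs b c j i := by
  intro i
  induction i with
  | zero =>
      intro _
      rw [Finset.sum_range_one]
      simp only [Tf, Rhs]
      have e1 : (b : ℤ) + (0 : ℕ) - j = ((b - j : ℕ) : ℤ) := by push_cast [Nat.cast_sub hj]; omega
      rw [e1, show ((b : ℤ) + c) = ((b + c : ℕ) : ℤ) by push_cast; ring,
        ibinom_nat _ _ (by omega)]
      rw [Nat.cast_choose ℚ (by omega : b - j ≤ b + c)]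
      have e2 : b + c - (b - j) = c + j := by omega
      rw [e2]
      simp only [Nat.sub_zero, Nat.sub_self, Nat.choose_self, Nat.add_zero, Nat.cast_zero,
        Nat.cast_one, pow_zero]
      rw [poch_zero, poch_zero, poch_zero]
      have f1 : ((b - j).factorial : ℚ) ≠ 0 := Nat.cast_ne_zero.2 (Nat.factorial_ne_zero _)
      have f2 : ((c + j).factorial : ℚ) ≠ 0 := Nat.cast_ne_zero.2 (Nat.factorial_ne_zero _)
      have f3 : ((b).factorial : ℚ) ≠ 0 := Nat.cast_ne_zero.2 (Nat.factorial_ne_zero _)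
      field_simp
  | succ i ih =>
      intro hib
      have hi : i ≤ b := by omega
      have hSi := ih hi
      -- telescoping
      set rho : ℚ := ((j : ℚ) - i) * ((b : ℚ) + c + i + 1)
          / (((b : ℚ) + i + 1) * ((b : ℚ) + i + 1 - j)) with hrho
      set g : ℕ → ℚ := fun k =>
        (-(k : ℚ) * ((k : ℚ) + b - j) / (((i : ℚ) + 1) * ((b : ℚ) + i + 1 - j)))
          * Tf b c j (i + 1) k with hg
      have hwz : ∀ k ∈ range (i + 1),
          Tf b c j (i + 1) k = rho * Tf b c j i k + (g (k + 1) - g k) := by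
        intro k hk
        have hk' : k ≤ i := by simpa [Nat.lt_succ_iff] using Finset.mem_range.mp hk
        have := wz b c j i k hj hk'
        rw [hg]
        push_cast
        linarith [this]
      rw [Finset.sum_range_succ, Finset.sum_congr rfl hwz, Finset.sum_add_distrib,
        ← Finset.mul_sum, Finset.sum_range_sub (fun k => g k), hSi]
      have hg0 : g 0 = 0 := by simp [hg]
      have hjQ : (j : ℚ) ≤ b := by exact_mod_cast hj
      have hb0 : (0 : ℚ) ≤ b := Nat.cast_nonneg b
      have hi0 : (0 : ℚ) ≤ i := Nat.cast_nonneg i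
      have h1 : ((b : ℚ) + i + 1 - j) ≠ 0 := by nlinarith
      have h5 : ((i : ℚ) + 1) ≠ 0 := by nlinarith
      have hgi : g (i + 1) = -Tf b c j (i + 1) (i + 1) := by
        rw [hg]
        have : (-((i : ℚ) + 1) * (((i : ℚ) + 1) + b - j)
            / (((i : ℚ) + 1) * ((b : ℚ) + i + 1 - j))) = -1 := by
          field_simp
          ring
        push_cast
        rw [show -(((i:ℚ))+1) * (((i:ℚ))+1+(b:ℚ)-(j:ℚ)) / ((((i:ℚ))+1) * (((b:ℚ))+(i:ℚ)+1-(j:ℚ)))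
            = -1 from this]
        ring
      rw [hg0, hgi]
      have hr : rho * Rhs b c j i = Rhs b c j (i + 1) := rho_step b c j i hj
      linarith [hr]

/-- LU-type triangularization of MacMahon's matrix: `U = L · M`, `L` is lower
unitriangular, `U` is upper triangular, and `det M = det U = M(a,b,c)`. -/
theorem macmahon_LU (a b c : ℕ) (hab : a ≤ b + 1) :
    let M : Matrix (Fin a) (Fin a) ℚ := Matrix.of fun i j =>
      ibinom ((b : ℤ) + c) ((b : ℤ) + (((i : ℕ) : ℤ) + 1) - (((j : ℕ) : ℤ) + 1))
    let L : Matrix (Fin a) (Fin a) ℚ := Matrix.of fun i j =>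
      if (j : ℕ) ≤ (i : ℕ) then
        (-1 : ℚ) ^ ((i : ℕ) + (j : ℕ)) * (Nat.choose (i : ℕ) (j : ℕ) : ℚ) *
          poch (c : ℚ) ((i : ℕ) - (j : ℕ)) / poch ((b : ℚ) + ((j : ℕ) + 1)) ((i : ℕ) - (j : ℕ))
      else 0
    let U : Matrix (Fin a) (Fin a) ℚ := Matrix.of fun i j =>
      poch (((j : ℕ) : ℚ) - ((i : ℕ) : ℚ) + 1) (i : ℕ) * (Nat.factorial b : ℚ) *
          (Nat.factorial (b + c + (i : ℕ)) : ℚ) /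
        ((Nat.factorial (b + (i : ℕ)) : ℚ) * (Nat.factorial (c + (j : ℕ)) : ℚ) *
          (Nat.factorial (b + (i : ℕ) - (j : ℕ)) : ℚ))
    U = L * M ∧
      (∀ i j : Fin a, i < j → L i j = 0) ∧ (∀ i : Fin a, L i i = 1) ∧
      (∀ i j : Fin a, j < i → U i j = 0) ∧
      M.det = macmahon a b c ∧ U.det = macmahon a b c := by
  intro M L U
  have hLM : U = L * M := by
    ext i j
    have hia := i.isLt
    have hja := j.isLt
    have hib : (i : ℕ) ≤ b := by omega
    have hjb : (j : ℕ) ≤ b := by omega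
    rw [Matrix.mul_apply]
    have hentry : ∀ k : Fin a, L i k * M k j = Tf b c (j : ℕ) (i : ℕ) (k : ℕ) := by
      intro k
      simp only [L, M, Matrix.of_apply, Tf]
      rcases le_or_gt (k : ℕ) (i : ℕ) with h | h
      · rw [if_pos h,
          show (b : ℤ) + (((k : ℕ) : ℤ) + 1) - (((j : ℕ) : ℤ) + 1) = (b : ℤ) + (k : ℕ) - (j : ℕ)
            from by ring,
          show (b : ℚ) + (((k : ℕ) : ℚ) + 1) = (b : ℚ) + ((k : ℕ) : ℚ) + 1 from by ring]
      · rw [if_neg (by omega), Nat.choose_eq_zero_of_lt h]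
        simp
    rw [Finset.sum_congr rfl (fun k _ => hentry k)]
    have hsum : ∑ k : Fin a, Tf b c (j : ℕ) (i : ℕ) (k : ℕ)
        = ∑ k ∈ range a, Tf b c (j : ℕ) (i : ℕ) k := by
      rw [← Fin.sum_univ_eq_sum_range]
    rw [hsum, ← Finset.sum_subset
        (Finset.range_subset_range.2 (by omega : (i : ℕ) + 1 ≤ a))
        (fun k _ hk => Tf_eq_zero (by simp only [Finset.mem_range] at hk ⊢; omega)),
      key b c (j : ℕ) hjb (i : ℕ) hib]
    simp only [U, Matrix.of_apply, Rhs]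
  have hLlow : ∀ i j : Fin a, i < j → L i j = 0 := by
    intro i j hij
    simp only [L, Matrix.of_apply]
    rw [if_neg (by exact_mod_cast Nat.not_le.2 hij)]
  have hLdiag : ∀ i : Fin a, L i i = 1 := by
    intro i
    simp only [L, Matrix.of_apply, if_pos le_rfl, Nat.sub_self, Nat.choose_self, poch_zero]
    rw [Even.neg_one_pow ⟨(i : ℕ), rfl⟩]
    norm_num
  have hUup : ∀ i j : Fin a, j < i → U i j = 0 := by
    intro i j hji
    simp only [U, Matrix.of_apply]
    have hji' : (j : ℕ) < (i : ℕ) := hji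
    have : poch (((j : ℕ) : ℚ) - ((i : ℕ) : ℚ) + 1) (i : ℕ) = 0 := by
      refine poch_eq_zero (n := (i : ℕ)) (m := (i : ℕ) - 1 - (j : ℕ)) (by omega) ?_
      have : (((i : ℕ) - 1 - (j : ℕ) : ℕ) : ℚ) = ((i : ℕ) : ℚ) - 1 - ((j : ℕ) : ℚ) := by
        push_cast [Nat.cast_sub (by omega : (j : ℕ) ≤ (i : ℕ) - 1),
          Nat.cast_sub (by omega : 1 ≤ (i : ℕ))]
        ring
      rw [this]; ring
    rw [this]
    simp
  have hUdet : U.det = macmahon a b c := by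
    rw [Matrix.det_of_upperTriangular (by intro i j h; exact hUup i j h)]
    rw [macmahon, ← Fin.prod_univ_eq_prod_range
      (fun i => ((Nat.factorial i : ℚ) * (Nat.factorial (b + c + i) : ℚ)) /
        ((Nat.factorial (b + i) : ℚ) * (Nat.factorial (c + i) : ℚ)))]
    refine Finset.prod_congr rfl fun i _ => ?_
    simp only [U, Matrix.of_apply]
    rw [show ((i : ℕ) : ℚ) - ((i : ℕ) : ℚ) + 1 = 1 from by ring]
    have hp1 : poch 1 (i : ℕ) = (Nat.factorial (i : ℕ) : ℚ) := by
      rw [poch, ascPochhammer_eval_one]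
    rw [hp1, show b + (i : ℕ) - (i : ℕ) = b from by omega]
    have f1 : (Nat.factorial b : ℚ) ≠ 0 := Nat.cast_ne_zero.2 (Nat.factorial_ne_zero _)
    have f2 : (Nat.factorial (b + (i : ℕ)) : ℚ) ≠ 0 := Nat.cast_ne_zero.2 (Nat.factorial_ne_zero _)
    have f3 : (Nat.factorial (c + (i : ℕ)) : ℚ) ≠ 0 := Nat.cast_ne_zero.2 (Nat.factorial_ne_zero _)
    field_simp
  have hLdet : L.det = 1 := by
    rw [Matrix.det_of_lowerTriangular L (by intro i j h; exact hLlow i j (OrderDual.toDual_lt_toDual.mp h))]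
    simp [hLdiag]
  have hMdet : M.det = macmahon a b c := by
    have : U.det = L.det * M.det := by rw [hLM, Matrix.det_mul]
    rw [hLdet, one_mul] at this
    rw [← this, hUdet]
  exact ⟨hLM, hLlow, hLdiag, hUup, hMdet, hUdet⟩
end
end

section
/- Let a, b, c be nonnegative integers. Define the a×a matrices over ℚ, indexed by i,j ∈ {1,…,a}: M_{i,j} := C(b+c, b+i−j); L_{i,j} := (−1)^{i+j} · C(i−1, j−1) · (c)_{i−j} / (b+j)_{i−j} for i ≥ j and L_{i,j} := 0 for i < j; T_{i,j} := (−1)^{i+j} · C(j−1, i−1) · (b)_{j−i} / (c+i)_{j−i} for j ≥ i and T_{i,j} := 0 for j < i; and the diagonal matrix D with D_{i,i} := (b+i−1)!·(c+i−1)! / ( (b+c+i−1)!·(i−1)! ). Then M is invertible over ℚ and M^{−1} = T·D·L. -/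
open Finset

noncomputable section

namespace MacAux

lemma ibinom_natCast (n k : ℕ) : ibinom (n:ℤ) (k:ℤ) = (n.choose k : ℚ) := by
  unfold ibinom
  by_cases h : (k:ℤ) ≤ (n:ℤ)
  · rw [if_pos ⟨Int.natCast_nonneg k, h⟩, Int.toNat_natCast, Int.toNat_natCast]
  · rw [if_neg (fun hc => h hc.2), Nat.choose_eq_zero_of_lt (by exact_mod_cast not_le.mp h),
      Nat.cast_zero]

lemma ibinom_neg_right {n k : ℤ} (h : k < 0) : ibinom n k = 0 := by
  unfold ibinom; rw [if_neg]; rintro ⟨h0, -⟩; omega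

lemma ibinom_lt {n k : ℤ} (h : n < k) : ibinom n k = 0 := by
  unfold ibinom; rw [if_neg]; rintro ⟨-, h1⟩; omega

lemma natA2 (n k : ℕ) : ((k:ℚ)+1) * ((n+1).choose (k+1) : ℚ) = ((n:ℚ)+1) * (n.choose k : ℚ) := by
  have h := congrArg (Nat.cast (R := ℚ)) (Nat.add_one_mul_choose_eq n k)
  push_cast at h
  linarith

lemma natA1 (n k : ℕ) : ((k:ℚ)+1) * (n.choose (k+1) : ℚ) = ((n:ℚ)-(k:ℚ)) * (n.choose k : ℚ) := by
  have h2 := natA2 n k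
  have hp : ((n+1).choose (k+1) : ℚ) = (n.choose k : ℚ) + (n.choose (k+1) : ℚ) := by
    exact_mod_cast congrArg (Nat.cast (R := ℚ)) (Nat.choose_succ_succ n k)
  linear_combination h2 - ((k:ℚ)+1) * hp

lemma A1 (n k : ℤ) : ((k:ℚ)+1) * ibinom n (k+1) = ((n:ℚ)-(k:ℚ)) * ibinom n k := by
  rcases lt_or_ge k 0 with hk | hk
  · by_cases hk1 : k = -1
    · subst hk1
      rw [ibinom_neg_right (by norm_num : (-1:ℤ) < 0)]
      norm_num
    · rw [ibinom_neg_right (by omega : k + 1 < 0), ibinom_neg_right hk]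
      ring
  · lift k to ℕ using hk with k'
    rcases lt_or_ge n 0 with hn | hn
    · rw [ibinom_lt (by omega), ibinom_lt (by omega)]
      ring
    · lift n to ℕ using hn with n'
      have h1 : ((k':ℕ):ℤ) + 1 = ((k'+1 : ℕ):ℤ) := by push_cast; ring
      rw [h1, ibinom_natCast, ibinom_natCast]
      have := natA1 n' k'
      push_cast
      convert this using 2 <;> push_cast <;> ring

lemma A2 (n k : ℤ) : ((k:ℚ)+1) * ibinom (n+1) (k+1) = ((n:ℚ)+1) * ibinom n k := by
  rcases lt_or_ge k 0 with hk | hk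
  · by_cases hk1 : k = -1
    · subst hk1
      rw [ibinom_neg_right (by norm_num : (-1:ℤ) < 0)]
      norm_num
    · rw [ibinom_neg_right (by omega : k + 1 < 0), ibinom_neg_right hk]
      ring
  · lift k to ℕ using hk with k'
    rcases lt_or_ge n 0 with hn | hn
    · rw [ibinom_lt (by omega), ibinom_lt (by omega)]
      ring
    · lift n to ℕ using hn with n'
      have h1 : ((k':ℕ):ℤ) + 1 = ((k'+1 : ℕ):ℤ) := by push_cast; ring
      have h2 : ((n':ℕ):ℤ) + 1 = ((n'+1 : ℕ):ℤ) := by push_cast; ring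
      rw [h1, h2, ibinom_natCast, ibinom_natCast]
      have := natA2 n' k'
      push_cast
      convert this using 2 <;> push_cast <;> ring

/-- The Saalschütz summand. -/
def fS (b c i j : ℕ) (m : ℤ) : ℚ :=
  ibinom (c:ℤ) ((i:ℤ)-m) * ibinom (b:ℤ) ((j:ℤ)-m) * ibinom ((b:ℤ)+(c:ℤ)+m) m

lemma fS_zero_of_gt {b c i j : ℕ} {m : ℤ} (h : (i:ℤ) < m) : fS b c i j m = 0 := by
  unfold fS
  rw [ibinom_neg_right (by omega : (i:ℤ)-m < 0)]
  ring

lemma cert (b c i j : ℕ) (m : ℤ) :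
    ((b:ℚ)+(i:ℚ)+1-(j:ℚ))*((i:ℚ)+1) * fS b c (i+1) j m
      - ((c:ℚ)+(j:ℚ)-(i:ℚ))*((b:ℚ)+(i:ℚ)+1) * fS b c i j m
    = ((m:ℚ)+1)*((j:ℚ)-(b:ℚ)-(m:ℚ)-1) * fS b c (i+1) j (m+1)
      - (m:ℚ)*((j:ℚ)-(b:ℚ)-(m:ℚ)) * fS b c (i+1) j m := by
  have h1 := A1 (c:ℤ) ((i:ℤ)-m)
  have h2 := A1 (b:ℤ) ((j:ℤ)-m-1)
  have h3 := A2 ((b:ℤ)+(c:ℤ)+m) m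
  unfold fS
  push_cast
  rw [show ((i:ℤ)+1)-m = (i:ℤ)-m+1 by ring]
  rw [show ((i:ℤ)+1)-(m+1) = (i:ℤ)-m by ring]
  rw [show ((j:ℤ))-(m+1) = (j:ℤ)-m-1 by ring]
  rw [show ((b:ℤ)+(c:ℤ)+(m+1)) = (b:ℤ)+(c:ℤ)+m+1 by ring]
  rw [show ((j:ℤ)-m-1)+1 = (j:ℤ)-m by ring] at h2
  push_cast at h1 h2 h3
  linear_combination
    (((b:ℚ)+(i:ℚ)+1+(m:ℚ)-(j:ℚ)) * ibinom (b:ℤ) ((j:ℤ)-m) * ibinom ((b:ℤ)+(c:ℤ)+m) m) * h1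
    - (((b:ℚ)+(c:ℚ)+(m:ℚ)+1) * ibinom (c:ℤ) ((i:ℤ)-m) * ibinom ((b:ℤ)+(c:ℤ)+m) m) * h2
    + (((b:ℚ)+(m:ℚ)+1-(j:ℚ)) * ibinom (c:ℤ) ((i:ℤ)-m) * ibinom (b:ℤ) ((j:ℤ)-m-1)) * h3


def Ssum (b c i j : ℕ) : ℚ := ∑ m ∈ range (i+1), fS b c i j (m:ℤ)

lemma Srec (b c i j : ℕ) :
    ((b:ℚ)+(i:ℚ)+1-(j:ℚ))*((i:ℚ)+1) * Ssum b c (i+1) j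
      = ((c:ℚ)+(j:ℚ)-(i:ℚ))*((b:ℚ)+(i:ℚ)+1) * Ssum b c i j := by
  have hS : Ssum b c i j = ∑ m ∈ range (i+2), fS b c i j (m:ℤ) := by
    rw [show i+2 = (i+1)+1 from rfl, Finset.sum_range_succ,
      fS_zero_of_gt (by exact_mod_cast Nat.lt_succ_self i), add_zero]
    rfl
  set G : ℕ → ℚ := fun m => (m:ℚ)*((j:ℚ)-(b:ℚ)-(m:ℚ)) * fS b c (i+1) j (m:ℤ) with hG
  have key : ∀ m ∈ range (i+2),
      ((b:ℚ)+(i:ℚ)+1-(j:ℚ))*((i:ℚ)+1) * fS b c (i+1) j (m:ℤ)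
        - ((c:ℚ)+(j:ℚ)-(i:ℚ))*((b:ℚ)+(i:ℚ)+1) * fS b c i j (m:ℤ)
      = G (m+1) - G m := by
    intro m _
    have := cert b c i j (m:ℤ)
    rw [hG]
    push_cast
    push_cast at this
    linarith
  have tele : ∑ m ∈ range (i+2), (G (m+1) - G m) = G (i+2) - G 0 := Finset.sum_range_sub G (i+2)
  have hG0 : G 0 = 0 := by simp [hG]
  have hGtop : G (i+2) = 0 := by
    have hz : fS b c (i+1) j ((i+2:ℕ):ℤ) = 0 := fS_zero_of_gt (by push_cast; omega)
    simp only [hG]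
    rw [hz]; ring
  have expand : ∑ m ∈ range (i+2),
      (((b:ℚ)+(i:ℚ)+1-(j:ℚ))*((i:ℚ)+1) * fS b c (i+1) j (m:ℤ)
        - ((c:ℚ)+(j:ℚ)-(i:ℚ))*((b:ℚ)+(i:ℚ)+1) * fS b c i j (m:ℤ)) = 0 := by
    rw [Finset.sum_congr rfl key, tele, hG0, hGtop, sub_zero]
  rw [Finset.sum_sub_distrib, ← Finset.mul_sum, ← Finset.mul_sum] at expand
  rw [hS]
  unfold Ssum
  linarith [expand]

lemma cast_sub_ne_zero {p q : ℕ} (h : p ≠ q) : (p:ℚ) - (q:ℚ) ≠ 0 := by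
  intro hc
  apply h
  exact_mod_cast sub_eq_zero.mp hc

lemma fact_ne (n : ℕ) : ((n.factorial : ℚ)) ≠ 0 := by
  exact_mod_cast n.factorial_ne_zero

lemma choose_ne {n k : ℕ} (h : k ≤ n) : ((n.choose k : ℚ)) ≠ 0 := by
  exact_mod_cast (Nat.choose_pos h).ne'

lemma Cmain (b c : ℕ) : ∀ i j : ℕ,
    Ssum b c i j * ((b+c).choose b : ℚ)
      = ibinom ((b:ℤ)+(c:ℤ)) ((b:ℤ)+(i:ℤ)-(j:ℤ)) * ((b+i).choose i : ℚ) * ((c+j).choose j : ℚ) := by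
  intro i
  induction i with
  | zero =>
    intro j
    have h0 : Ssum b c 0 j = (b.choose j : ℚ) := by
      unfold Ssum fS
      rw [Finset.sum_range_one]
      push_cast
      rw [sub_zero, add_zero]
      rw [show ((b:ℤ)+(c:ℤ)) = ((b+c:ℕ):ℤ) by push_cast; ring,
        show (0:ℤ) = ((0:ℕ):ℤ) from rfl, ibinom_natCast, ibinom_natCast, ibinom_natCast]
      simp
    rw [h0]
    simp only [Nat.cast_zero]
    rcases le_or_gt j b with hjb | hjb
    · rw [show ((b:ℤ)+(0:ℤ)-(j:ℤ)) = (((b-j:ℕ)):ℤ) by push_cast; omega,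
        show ((b:ℤ)+(c:ℤ)) = ((b+c:ℕ):ℤ) by push_cast; ring, ibinom_natCast]
      rw [Nat.cast_choose ℚ hjb, Nat.cast_choose ℚ (Nat.le_add_right b c),
        Nat.cast_choose ℚ (show b-j ≤ b+c by omega), Nat.cast_choose ℚ (Nat.le_add_left j c)]
      rw [show b+c-b = c by omega, show b+c-(b-j) = c+j by omega, show c+j-j = c by omega,
        show b+0 = b by omega]
      rw [Nat.choose_zero_right]
      push_cast
      have e1 := fact_ne b; have e2 := fact_ne c; have e3 := fact_ne j
      have e4 := fact_ne (b-j); have e5 := fact_ne (c+j)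
      field_simp
    · rw [Nat.choose_eq_zero_of_lt hjb, ibinom_neg_right (by omega : (b:ℤ)+(0:ℤ)-(j:ℤ) < 0)]
      push_cast
      ring
  | succ i ih =>
    intro j
    by_cases hj : j = b + i + 1
    · subst hj
      have hsingle : Ssum b c (i+1) (b+i+1) = ((b+c+i+1).choose (i+1) : ℚ) := by
        unfold Ssum
        rw [Finset.sum_eq_single_of_mem (i+1) (by simp)]
        · unfold fS
          rw [show ((i+1:ℕ):ℤ)-((i+1:ℕ):ℤ) = ((0:ℕ):ℤ) by ring,
            show ((b+i+1:ℕ):ℤ)-((i+1:ℕ):ℤ) = ((b:ℕ):ℤ) by push_cast; ring,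
            show ((b:ℤ)+(c:ℤ)+((i+1:ℕ):ℤ)) = ((b+c+i+1:ℕ):ℤ) by push_cast; ring]
          rw [ibinom_natCast, ibinom_natCast, ibinom_natCast]
          simp
        · intro m hm hne
          unfold fS
          have hmle : m ≤ i := by simp at hm; omega
          rw [ibinom_lt (show (b:ℤ) < ((b+i+1:ℕ):ℤ)-(m:ℤ) by push_cast; omega)]
          ring
      rw [hsingle]
      rw [show ((b:ℤ)+((i+1:ℕ):ℤ)-((b+i+1:ℕ):ℤ)) = ((0:ℕ):ℤ) by push_cast; ring,
        show ((b:ℤ)+(c:ℤ)) = ((b+c:ℕ):ℤ) by push_cast; ring, ibinom_natCast]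
      rw [Nat.cast_choose ℚ (show i+1 ≤ b+c+i+1 by omega),
        Nat.cast_choose ℚ (Nat.le_add_right b c),
        Nat.cast_choose ℚ (show i+1 ≤ b+(i+1) by omega),
        Nat.cast_choose ℚ (show b+i+1 ≤ c+(b+i+1) by omega)]
      rw [show b+c+i+1-(i+1) = b+c by omega, show b+c-b = c by omega,
        show b+(i+1)-(i+1) = b by omega, show c+(b+i+1)-(b+i+1) = c by omega,
        Nat.choose_zero_right]
      push_cast
      have e1 := fact_ne b; have e2 := fact_ne c; have e3 := fact_ne (i+1)
      have e4 := fact_ne (b+c); have e5 := fact_ne (b+i+1)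
      field_simp
      ring
    · have hrec := Srec b c i j
      have hA := A1 ((b:ℤ)+(c:ℤ)) ((b:ℤ)+(i:ℤ)-(j:ℤ))
      rw [show ((b:ℤ)+(i:ℤ)-(j:ℤ))+1 = (b:ℤ)+((i+1:ℕ):ℤ)-(j:ℤ) by push_cast; ring] at hA
      push_cast at hA
      have hB := natA2 (b+i) i
      rw [show b+i+1 = b+(i+1) by omega] at hB
      push_cast at hB
      have hne1 : ((b:ℚ)+(i:ℚ)+1-(j:ℚ)) ≠ 0 := by
        have : ((b+i+1:ℕ):ℚ) - (j:ℚ) ≠ 0 := cast_sub_ne_zero (by omega)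
        push_cast at this
        convert this using 2 <;> ring
      have hne2 : ((i:ℚ)+1) ≠ 0 := by positivity
      apply mul_left_cancel₀ (mul_ne_zero hne1 hne2)
      have ihj := ih j
      calc ((b:ℚ)+(i:ℚ)+1-(j:ℚ))*((i:ℚ)+1) * (Ssum b c (i+1) j * ((b+c).choose b : ℚ))
          = (((b:ℚ)+(i:ℚ)+1-(j:ℚ))*((i:ℚ)+1) * Ssum b c (i+1) j) * ((b+c).choose b : ℚ) := by
            ring
        _ = (((c:ℚ)+(j:ℚ)-(i:ℚ))*((b:ℚ)+(i:ℚ)+1)) * (Ssum b c i j * ((b+c).choose b : ℚ)) := by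
            rw [hrec]; ring
        _ = (((c:ℚ)+(j:ℚ)-(i:ℚ))*((b:ℚ)+(i:ℚ)+1)) *
              (ibinom ((b:ℤ)+(c:ℤ)) ((b:ℤ)+(i:ℤ)-(j:ℤ)) * ((b+i).choose i : ℚ) * ((c+j).choose j : ℚ)) := by
            rw [ihj]
        _ = ((b:ℚ)+(i:ℚ)+1-(j:ℚ))*((i:ℚ)+1) *
              (ibinom ((b:ℤ)+(c:ℤ)) ((b:ℤ)+((i+1:ℕ):ℤ)-(j:ℤ)) * ((b+(i+1)).choose (i+1) : ℚ) * ((c+j).choose j : ℚ)) := by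
            push_cast
            linear_combination
              (-(((c+j).choose j : ℚ)) * (((i:ℚ)+1) * ((b+(i+1)).choose (i+1) : ℚ))) * hA
              + (-(((c+j).choose j : ℚ)) * (((c:ℚ)+(j:ℚ)-(i:ℚ)) *
                  ibinom ((b:ℤ)+(c:ℤ)) ((b:ℤ)+(i:ℤ)-(j:ℤ)))) * hB

lemma poch_natCast (q n : ℕ) : poch (q:ℚ) n = (q.ascFactorial n : ℚ) := by
  unfold poch
  rw [Nat.cast_ascFactorial]

lemma poch_cast_add_pos (q n : ℕ) : 0 < poch ((q:ℚ)+1) n := by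
  have : ((q:ℚ)+1) = ((q+1:ℕ):ℚ) := by push_cast; ring
  rw [this, poch_natCast]
  exact_mod_cast Nat.ascFactorial_pos q n

lemma fact_mul_poch (q n : ℕ) : (q.factorial : ℚ) * poch ((q:ℚ)+1) n = ((q+n).factorial : ℚ) := by
  have : ((q:ℚ)+1) = ((q+1:ℕ):ℚ) := by push_cast; ring
  rw [this, poch_natCast]
  exact_mod_cast congrArg (Nat.cast (R := ℚ)) (Nat.factorial_mul_ascFactorial q n)

lemma ring_choose_neg (c n : ℕ) :
    Ring.choose (-(c:ℚ)) n = (-1)^n * poch (c:ℚ) n / (n.factorial : ℚ) := by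
  have h1 : n.factorial • Ring.choose (-(c:ℚ)) n
      = (descPochhammer ℤ n).smeval (-(c:ℚ)) :=
    (Ring.descPochhammer_eq_factorial_smul_choose _ n).symm
  rw [Polynomial.descPochhammer_smeval_eq_ascPochhammer,
    Polynomial.ascPochhammer_smeval_eq_eval] at h1
  have h2 : (-(c:ℚ) - n + 1) = -((c:ℚ) + n - 1) := by ring
  rw [h2, ascPochhammer_eval_neg_eq_descPochhammer, descPochhammer_eval_eq_ascPochhammer] at h1
  have h3 : ((c:ℚ) + n - 1 - n + 1) = (c:ℚ) := by ring
  rw [h3] at h1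
  rw [nsmul_eq_mul] at h1
  have h4 : (n.factorial : ℚ) ≠ 0 := fact_ne n
  field_simp
  rw [mul_comm] at h1
  rw [h1]
  unfold poch
  ring

lemma vand1 (c s : ℕ) :
    ∑ n ∈ range (s+1), Ring.choose (-(c:ℚ)) n * (c.choose (s-n) : ℚ)
      = if s = 0 then 1 else 0 := by
  have h := Ring.add_choose_eq (r := -(c:ℚ)) (s := (c:ℚ)) s (Commute.all _ _)
  rw [neg_add_cancel, Ring.choose_zero_ite,
    Finset.Nat.sum_antidiagonal_eq_sum_range_succ
      (fun p q => Ring.choose (-(c:ℚ)) p * Ring.choose ((c:ℚ)) q) s] at h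
  have h2 : ∑ n ∈ range (s+1), Ring.choose (-(c:ℚ)) n * (c.choose (s-n) : ℚ)
      = ∑ n ∈ range (s+1), Ring.choose (-(c:ℚ)) n * Ring.choose ((c:ℚ)) (s-n) :=
    Finset.sum_congr rfl fun n _ => by rw [Ring.choose_natCast]
  rw [h2]
  simpa using h.symm

lemma vand2 (b s : ℕ) :
    ∑ n ∈ range (s+1), (b.choose n : ℚ) * Ring.choose (-(b:ℚ)) (s-n)
      = if s = 0 then 1 else 0 := by
  have h := Ring.add_choose_eq (r := (b:ℚ)) (s := -(b:ℚ)) s (Commute.all _ _)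
  rw [add_neg_cancel, Ring.choose_zero_ite,
    Finset.Nat.sum_antidiagonal_eq_sum_range_succ
      (fun p q => Ring.choose ((b:ℚ)) p * Ring.choose (-(b:ℚ)) q) s] at h
  have h2 : ∑ n ∈ range (s+1), (b.choose n : ℚ) * Ring.choose (-(b:ℚ)) (s-n)
      = ∑ n ∈ range (s+1), Ring.choose ((b:ℚ)) n * Ring.choose (-(b:ℚ)) (s-n) :=
    Finset.sum_congr rfl fun n _ => by rw [Ring.choose_natCast]
  rw [h2]
  simpa using h.symm

lemma neg_one_pow_add_eq_sub {m k : ℕ} (h : k ≤ m) : ((-1:ℚ))^(m+k) = (-1)^(m-k) := by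
  rw [show m+k = (m-k)+2*k by omega, pow_add, pow_mul, neg_one_sq, one_pow, mul_one]


lemma scalarM (b c m : ℕ) :
    (((b+m).choose m : ℚ)) * (((c+m).choose m : ℚ)) * (((b+c+m).factorial : ℚ)) * ((m.factorial : ℚ))
      = ((b+c).choose b : ℚ) * (((b+c+m).choose m : ℚ)) * (((b+m).factorial : ℚ)) * (((c+m).factorial : ℚ)) := by
  rw [Nat.cast_choose ℚ (Nat.le_add_left m b), Nat.cast_choose ℚ (Nat.le_add_left m c),
    Nat.cast_choose ℚ (Nat.le_add_right b c), Nat.cast_choose ℚ (Nat.le_add_left m (b+c))]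
  rw [show b+m-m = b by omega, show c+m-m = c by omega, show b+c-b = c by omega,
    show b+c+m-m = b+c by omega]
  have e1 := fact_ne b; have e2 := fact_ne c; have e3 := fact_ne m
  have e4 := fact_ne (b+c); have e5 := fact_ne (b+m); have e6 := fact_ne (c+m)
  have e7 := fact_ne (b+c+m)
  field_simp

end MacAux

open MacAux in
/-- Inverse of MacMahon's matrix: `M⁻¹ = T · D · L`. -/
theorem macmahon_inverse (a b c : ℕ) :
    let M : Matrix (Fin a) (Fin a) ℚ := Matrix.of fun i j =>
      ibinom ((b : ℤ) + c) ((b : ℤ) + (((i : ℕ) : ℤ) + 1) - (((j : ℕ) : ℤ) + 1))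
    let L : Matrix (Fin a) (Fin a) ℚ := Matrix.of fun i j =>
      if (j : ℕ) ≤ (i : ℕ) then
        (-1 : ℚ) ^ ((i : ℕ) + (j : ℕ)) * (Nat.choose (i : ℕ) (j : ℕ) : ℚ) *
          poch (c : ℚ) ((i : ℕ) - (j : ℕ)) / poch ((b : ℚ) + ((j : ℕ) + 1)) ((i : ℕ) - (j : ℕ))
      else 0
    let T : Matrix (Fin a) (Fin a) ℚ := Matrix.of fun i j =>
      if (i : ℕ) ≤ (j : ℕ) then
        (-1 : ℚ) ^ ((i : ℕ) + (j : ℕ)) * (Nat.choose (j : ℕ) (i : ℕ) : ℚ) *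
          poch ((b : ℚ)) ((j : ℕ) - (i : ℕ)) / poch ((c : ℚ) + ((i : ℕ) + 1)) ((j : ℕ) - (i : ℕ))
      else 0
    let D : Matrix (Fin a) (Fin a) ℚ := Matrix.diagonal fun i =>
      (Nat.factorial (b + (i : ℕ)) : ℚ) * (Nat.factorial (c + (i : ℕ)) : ℚ) /
        ((Nat.factorial (b + c + (i : ℕ)) : ℚ) * (Nat.factorial (i : ℕ) : ℚ))
    IsUnit M.det ∧ M⁻¹ = T * D * L := by
  intro M L T D
  set X : Matrix (Fin a) (Fin a) ℚ := Matrix.of fun i m =>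
    if (m : ℕ) ≤ (i : ℕ) then
      ((c.choose ((i:ℕ)-(m:ℕ)) : ℚ) * (((b+(m:ℕ)).choose (m:ℕ)) : ℚ)) / (((b+(i:ℕ)).choose (i:ℕ)) : ℚ)
    else 0 with hXdef
  set Y : Matrix (Fin a) (Fin a) ℚ := Matrix.of fun m j =>
    if (m : ℕ) ≤ (j : ℕ) then
      ((b.choose ((j:ℕ)-(m:ℕ)) : ℚ) * (((c+(m:ℕ)).choose (m:ℕ)) : ℚ)) / (((c+(j:ℕ)).choose (j:ℕ)) : ℚ)
    else 0 with hYdef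
  set Eo : Matrix (Fin a) (Fin a) ℚ := Matrix.diagonal (fun m : Fin a =>
    (((b+c+(m:ℕ)).factorial : ℚ) * ((m:ℕ).factorial : ℚ)) /
      (((b+(m:ℕ)).factorial : ℚ) * ((c+(m:ℕ)).factorial : ℚ))) with hEodef
  have hD : D = Matrix.diagonal (fun i : Fin a =>
      ((b+(i:ℕ)).factorial : ℚ) * ((c+(i:ℕ)).factorial : ℚ) /
        (((b+c+(i:ℕ)).factorial : ℚ) * ((i:ℕ).factorial : ℚ))) := rfl
  have hED : Eo * D = 1 := by
    rw [hEodef, hD, Matrix.diagonal_mul_diagonal, ← Matrix.diagonal_one]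
    congr 1
    funext m
    have e1 := fact_ne (b+(m:ℕ)); have e2 := fact_ne (c+(m:ℕ))
    have e3 := fact_ne (b+c+(m:ℕ)); have e4 := fact_ne ((m:ℕ))
    field_simp
  have hXL : X * L = 1 := by
    ext i k
    rw [Matrix.mul_apply]
    by_cases hik : (k:ℕ) ≤ (i:ℕ)
    · have hterm : ∀ m : Fin a, X i m * L m k
          = (((b+(k:ℕ)).choose (k:ℕ) : ℚ) / (((b+(i:ℕ)).choose (i:ℕ)) : ℚ)) *
            (if (k:ℕ) ≤ (m:ℕ) ∧ (m:ℕ) ≤ (i:ℕ) then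
              Ring.choose (-(c:ℚ)) ((m:ℕ)-(k:ℕ)) * (c.choose ((i:ℕ)-(m:ℕ)) : ℚ) else 0) := by
        intro m
        have hL : L m k = if (k:ℕ) ≤ (m:ℕ) then
            (-1 : ℚ) ^ ((m:ℕ) + (k:ℕ)) * (Nat.choose (m:ℕ) (k:ℕ) : ℚ) *
              poch (c : ℚ) ((m:ℕ) - (k:ℕ)) / poch ((b : ℚ) + (((k:ℕ):ℚ) + 1)) ((m:ℕ) - (k:ℕ))
          else 0 := rfl
        rw [hXdef, hL]
        simp only [Matrix.of_apply]
        by_cases h2 : (k:ℕ) ≤ (m:ℕ)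
        · by_cases h1 : (m:ℕ) ≤ (i:ℕ)
          · rw [if_pos h1, if_pos h2, if_pos ⟨h2, h1⟩, ring_choose_neg,
              neg_one_pow_add_eq_sub h2]
            have hp : poch ((b:ℚ) + (((k:ℕ):ℚ) + 1)) ((m:ℕ)-(k:ℕ))
                = ((b+(m:ℕ)).factorial : ℚ) / ((b+(k:ℕ)).factorial : ℚ) := by
              rw [eq_div_iff (fact_ne _), mul_comm,
                show ((b:ℚ) + (((k:ℕ):ℚ) + 1)) = (((b+(k:ℕ) : ℕ)):ℚ)+1 by push_cast; ring,
                fact_mul_poch (b+(k:ℕ)) ((m:ℕ)-(k:ℕ)),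
                show b+(k:ℕ)+((m:ℕ)-(k:ℕ)) = b+(m:ℕ) by omega]
            rw [hp]
            rw [Nat.cast_choose ℚ h2, Nat.cast_choose ℚ (Nat.le_add_left (m:ℕ) b),
              Nat.cast_choose ℚ (Nat.le_add_left (k:ℕ) b)]
            rw [show b+(m:ℕ)-(m:ℕ) = b by omega, show b+(k:ℕ)-(k:ℕ) = b by omega]
            have e1 := fact_ne b; have e2 := fact_ne (k:ℕ); have e3 := fact_ne ((m:ℕ)-(k:ℕ))
            have e4 := fact_ne (b+(m:ℕ)); have e5 := fact_ne (b+(k:ℕ)); have e6 := fact_ne (m:ℕ)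
            have n1 := choose_ne (Nat.le_add_left (i:ℕ) b)
            field_simp
          · rw [if_neg h1, zero_mul,
              if_neg (show ¬((k:ℕ) ≤ (m:ℕ) ∧ (m:ℕ) ≤ (i:ℕ)) from fun hc => h1 hc.2), mul_zero]
        · rw [if_neg h2, mul_zero,
              if_neg (show ¬((k:ℕ) ≤ (m:ℕ) ∧ (m:ℕ) ≤ (i:ℕ)) from fun hc => h2 hc.1), mul_zero]
      rw [Finset.sum_congr rfl (fun m _ => hterm m), ← Finset.mul_sum]
      have hw : ∑ m : Fin a, (if (k:ℕ) ≤ (m:ℕ) ∧ (m:ℕ) ≤ (i:ℕ) then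
            Ring.choose (-(c:ℚ)) ((m:ℕ)-(k:ℕ)) * (c.choose ((i:ℕ)-(m:ℕ)) : ℚ) else 0)
          = if (i:ℕ) - (k:ℕ) = 0 then 1 else 0 := by
        rw [Fin.sum_univ_eq_sum_range (fun m => if (k:ℕ) ≤ m ∧ m ≤ (i:ℕ) then
            Ring.choose (-(c:ℚ)) (m-(k:ℕ)) * (c.choose ((i:ℕ)-m) : ℚ) else 0) a]
        rw [← Finset.sum_subset (show Icc (k:ℕ) (i:ℕ) ⊆ range a by
            intro x hx
            simp only [Finset.mem_Icc] at hx
            simp only [Finset.mem_range]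
            exact lt_of_le_of_lt hx.2 i.isLt)
          (by
            intro x _ hxn
            simp only [Finset.mem_Icc] at hxn
            rw [if_neg (fun hc => hxn ⟨hc.1, hc.2⟩)])]
        rw [← Finset.Ico_add_one_right_eq_Icc, Finset.sum_Ico_eq_sum_range]
        rw [show (i:ℕ)+1-(k:ℕ) = ((i:ℕ)-(k:ℕ))+1 by omega]
        rw [Finset.sum_congr rfl (fun n hn => ?_), vand1 c ((i:ℕ)-(k:ℕ))]
        simp only [Finset.mem_range] at hn
        rw [if_pos ⟨Nat.le_add_right _ _, by omega⟩,
          show (k:ℕ)+n-(k:ℕ) = n by omega, show (i:ℕ)-((k:ℕ)+n) = (i:ℕ)-(k:ℕ)-n by omega]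
      rw [hw]
      by_cases h0 : i = k
      · subst h0
        rw [if_pos (by omega), Matrix.one_apply_eq, mul_one,
          div_self (choose_ne (Nat.le_add_left (i:ℕ) b))]
      · rw [if_neg (fun hc => h0 (Fin.ext (by omega))), Matrix.one_apply_ne h0, mul_zero]
    · rw [Finset.sum_eq_zero, Matrix.one_apply_ne (fun hc => hik (by rw [hc]))]
      intro m _
      by_cases h1 : (m:ℕ) ≤ (i:ℕ)
      · have hL : L m k = 0 := by
          show (if (k:ℕ) ≤ (m:ℕ) then _ else (0:ℚ)) = 0
          rw [if_neg (by omega)]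
        rw [hL, mul_zero]
      · have hX : X i m = 0 := by
          rw [hXdef]
          simp only [Matrix.of_apply]
          rw [if_neg h1]
        rw [hX, zero_mul]
  have hYT : Y * T = 1 := by
    ext i k
    rw [Matrix.mul_apply]
    by_cases hik : (i:ℕ) ≤ (k:ℕ)
    · have hterm : ∀ m : Fin a, Y i m * T m k
          = (((c+(i:ℕ)).choose (i:ℕ) : ℚ) / (((c+(k:ℕ)).choose (k:ℕ)) : ℚ)) *
            (if (i:ℕ) ≤ (m:ℕ) ∧ (m:ℕ) ≤ (k:ℕ) then
              (b.choose ((m:ℕ)-(i:ℕ)) : ℚ) * Ring.choose (-(b:ℚ)) ((k:ℕ)-(m:ℕ)) else 0) := by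
        intro m
        have hT : T m k = if (m:ℕ) ≤ (k:ℕ) then
            (-1 : ℚ) ^ ((m:ℕ) + (k:ℕ)) * (Nat.choose (k:ℕ) (m:ℕ) : ℚ) *
              poch ((b : ℚ)) ((k:ℕ) - (m:ℕ)) / poch ((c : ℚ) + (((m:ℕ):ℚ) + 1)) ((k:ℕ) - (m:ℕ))
          else 0 := rfl
        rw [hYdef, hT]
        simp only [Matrix.of_apply]
        by_cases h2 : (i:ℕ) ≤ (m:ℕ)
        · by_cases h1 : (m:ℕ) ≤ (k:ℕ)
          · rw [if_pos h1, if_pos h2, if_pos ⟨h2, h1⟩, ring_choose_neg,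
              show ((-1:ℚ))^((m:ℕ)+(k:ℕ)) = ((-1:ℚ))^((k:ℕ)+(m:ℕ)) by rw [Nat.add_comm],
              neg_one_pow_add_eq_sub h1]
            have hp : poch ((c:ℚ) + (((m:ℕ):ℚ) + 1)) ((k:ℕ)-(m:ℕ))
                = ((c+(k:ℕ)).factorial : ℚ) / ((c+(m:ℕ)).factorial : ℚ) := by
              rw [eq_div_iff (fact_ne _), mul_comm,
                show ((c:ℚ) + (((m:ℕ):ℚ) + 1)) = (((c+(m:ℕ) : ℕ)):ℚ)+1 by push_cast; ring,
                fact_mul_poch (c+(m:ℕ)) ((k:ℕ)-(m:ℕ)),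
                show c+(m:ℕ)+((k:ℕ)-(m:ℕ)) = c+(k:ℕ) by omega]
            rw [hp]
            rw [Nat.cast_choose ℚ h1, Nat.cast_choose ℚ (Nat.le_add_left (m:ℕ) c),
              Nat.cast_choose ℚ (Nat.le_add_left (k:ℕ) c)]
            rw [show c+(m:ℕ)-(m:ℕ) = c by omega, show c+(k:ℕ)-(k:ℕ) = c by omega]
            have e1 := fact_ne c; have e2 := fact_ne (m:ℕ); have e3 := fact_ne ((k:ℕ)-(m:ℕ))
            have e4 := fact_ne (c+(m:ℕ)); have e5 := fact_ne (c+(k:ℕ)); have e6 := fact_ne (k:ℕ)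
            have n1 := choose_ne (Nat.le_add_left (k:ℕ) c)
            field_simp
          · rw [if_neg h1, mul_zero,
              if_neg (show ¬((i:ℕ) ≤ (m:ℕ) ∧ (m:ℕ) ≤ (k:ℕ)) from fun hc => h1 hc.2), mul_zero]
        · rw [if_neg h2, zero_mul,
              if_neg (show ¬((i:ℕ) ≤ (m:ℕ) ∧ (m:ℕ) ≤ (k:ℕ)) from fun hc => h2 hc.1), mul_zero]
      rw [Finset.sum_congr rfl (fun m _ => hterm m), ← Finset.mul_sum]
      have hw : ∑ m : Fin a, (if (i:ℕ) ≤ (m:ℕ) ∧ (m:ℕ) ≤ (k:ℕ) then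
            (b.choose ((m:ℕ)-(i:ℕ)) : ℚ) * Ring.choose (-(b:ℚ)) ((k:ℕ)-(m:ℕ)) else 0)
          = if (k:ℕ) - (i:ℕ) = 0 then 1 else 0 := by
        rw [Fin.sum_univ_eq_sum_range (fun m => if (i:ℕ) ≤ m ∧ m ≤ (k:ℕ) then
            (b.choose (m-(i:ℕ)) : ℚ) * Ring.choose (-(b:ℚ)) ((k:ℕ)-m) else 0) a]
        rw [← Finset.sum_subset (show Icc (i:ℕ) (k:ℕ) ⊆ range a by
            intro x hx
            simp only [Finset.mem_Icc] at hx
            simp only [Finset.mem_range]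
            exact lt_of_le_of_lt hx.2 k.isLt)
          (by
            intro x _ hxn
            simp only [Finset.mem_Icc] at hxn
            rw [if_neg (fun hc => hxn ⟨hc.1, hc.2⟩)])]
        rw [← Finset.Ico_add_one_right_eq_Icc, Finset.sum_Ico_eq_sum_range]
        rw [show (k:ℕ)+1-(i:ℕ) = ((k:ℕ)-(i:ℕ))+1 by omega]
        rw [Finset.sum_congr rfl (fun n hn => ?_), vand2 b ((k:ℕ)-(i:ℕ))]
        simp only [Finset.mem_range] at hn
        rw [if_pos ⟨Nat.le_add_right _ _, by omega⟩,
          show (i:ℕ)+n-(i:ℕ) = n by omega, show (k:ℕ)-((i:ℕ)+n) = (k:ℕ)-(i:ℕ)-n by omega]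
      rw [hw]
      by_cases h0 : i = k
      · subst h0
        rw [if_pos (by omega), Matrix.one_apply_eq, mul_one,
          div_self (choose_ne (Nat.le_add_left (i:ℕ) c))]
      · rw [if_neg (fun hc => h0 (Fin.ext (by omega))), Matrix.one_apply_ne h0, mul_zero]
    · rw [Finset.sum_eq_zero, Matrix.one_apply_ne (fun hc => hik (by rw [hc]))]
      intro m _
      by_cases h1 : (i:ℕ) ≤ (m:ℕ)
      · have hT : T m k = 0 := by
          show (if (m:ℕ) ≤ (k:ℕ) then _ else (0:ℚ)) = 0
          rw [if_neg (by omega)]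
        rw [hT, mul_zero]
      · have hY : Y i m = 0 := by
          rw [hYdef]
          simp only [Matrix.of_apply]
          rw [if_neg h1]
        rw [hY, zero_mul]
  have hM : M = X * Eo * Y := by
    ext i j
    have hXE : ∀ m : Fin a, (X * Eo) i m = X i m *
        ((((b+c+(m:ℕ)).factorial : ℚ) * ((m:ℕ).factorial : ℚ)) /
          (((b+(m:ℕ)).factorial : ℚ) * ((c+(m:ℕ)).factorial : ℚ))) := by
      intro m
      rw [hEodef, Matrix.mul_diagonal]
    rw [Matrix.mul_apply]
    have hterm : ∀ m : Fin a, (X * Eo) i m * Y m j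
        = (((b+c).choose b : ℚ) / (((b+(i:ℕ)).choose (i:ℕ) : ℚ) * ((c+(j:ℕ)).choose (j:ℕ) : ℚ)))
            * fS b c (i:ℕ) (j:ℕ) (((m:ℕ):ℕ):ℤ) := by
      intro m
      rw [hXE m, hXdef, hYdef]
      simp only [Matrix.of_apply]
      by_cases h1 : (m:ℕ) ≤ (i:ℕ)
      · by_cases h2 : (m:ℕ) ≤ (j:ℕ)
        · rw [if_pos h1, if_pos h2]
          unfold fS
          rw [show ((i:ℕ):ℤ)-((m:ℕ):ℤ) = (((i:ℕ)-(m:ℕ) : ℕ):ℤ) by omega,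
            show ((j:ℕ):ℤ)-((m:ℕ):ℤ) = (((j:ℕ)-(m:ℕ) : ℕ):ℤ) by omega,
            show ((b:ℕ):ℤ)+((c:ℕ):ℤ)+((m:ℕ):ℤ) = ((b+c+(m:ℕ) : ℕ):ℤ) by push_cast; ring,
            ibinom_natCast, ibinom_natCast, ibinom_natCast]
          have hs := scalarM b c (m:ℕ)
          have e1 := fact_ne (b+(m:ℕ)); have e2 := fact_ne (c+(m:ℕ))
          have n1 := choose_ne (Nat.le_add_left (i:ℕ) b)
          have n2 := choose_ne (Nat.le_add_left (j:ℕ) c)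
          field_simp
          linear_combination ((c.choose ((i:ℕ)-(m:ℕ)) : ℚ) * (b.choose ((j:ℕ)-(m:ℕ)) : ℚ)) * hs
        · rw [if_neg h2]
          unfold fS
          rw [ibinom_neg_right (show ((j:ℕ):ℤ)-((m:ℕ):ℤ) < 0 by omega)]
          ring
      · rw [if_neg h1]
        unfold fS
        rw [ibinom_neg_right (show ((i:ℕ):ℤ)-((m:ℕ):ℤ) < 0 by omega)]
        ring
    rw [Finset.sum_congr rfl (fun m _ => hterm m), ← Finset.mul_sum]
    have hsum : ∑ m : Fin a, fS b c (i:ℕ) (j:ℕ) (((m:ℕ):ℕ):ℤ) = Ssum b c (i:ℕ) (j:ℕ) := by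
      rw [Fin.sum_univ_eq_sum_range (fun m => fS b c (i:ℕ) (j:ℕ) ((m:ℕ):ℤ)) a]
      unfold Ssum
      rw [← Finset.sum_subset (Finset.range_subset_range.mpr (show (i:ℕ)+1 ≤ a from i.isLt))]
      intro m hm hnot
      apply fS_zero_of_gt
      simp only [Finset.mem_range] at hm hnot
      omega
    rw [hsum]
    have hC := Cmain b c (i:ℕ) (j:ℕ)
    have n1 := choose_ne (Nat.le_add_left (i:ℕ) b)
    have n2 := choose_ne (Nat.le_add_left (j:ℕ) c)
    have hMij : M i j = ibinom ((b:ℤ)+(c:ℤ)) ((b:ℤ)+((i:ℕ):ℤ)-((j:ℕ):ℤ)) := by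
      show ibinom ((b : ℤ) + c) ((b : ℤ) + (((i : ℕ) : ℤ) + 1) - (((j : ℕ) : ℤ) + 1)) = _
      rw [show ((b : ℤ) + (((i : ℕ) : ℤ) + 1) - (((j : ℕ) : ℤ) + 1)) = (b:ℤ)+((i:ℕ):ℤ)-((j:ℕ):ℤ) by ring]
    rw [hMij]
    rw [div_mul_eq_mul_div, eq_div_iff (mul_ne_zero n1 n2)]
    linear_combination -hC
  have hright : M * (T * D * L) = 1 := by
    rw [hM]
    simp only [Matrix.mul_assoc]
    rw [show T * (D * L) = (T * D) * L from (Matrix.mul_assoc T D L).symm]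
    rw [show Y * ((T * D) * L) = (Y * (T * D)) * L from (Matrix.mul_assoc Y (T*D) L).symm]
    rw [show Y * (T * D) = (Y * T) * D from (Matrix.mul_assoc Y T D).symm, hYT, one_mul]
    rw [show Eo * (D * L) = (Eo * D) * L from (Matrix.mul_assoc Eo D L).symm, hED, one_mul, hXL]
  exact ⟨Matrix.isUnit_det_of_right_inverse hright, Matrix.inv_eq_right_inv hright⟩
end
end
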